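/- arXiv:2101.01512 — 12 statements merged into one kernel-verified Lean document; each statement's English description precedes it below -/
import Mathlib

section
/- Let n be a nonnegative integer. The map ϑ(x,y) = (6x+3y+1, 3y+1) is a bijection from C_n onto the set F_n = {(u,v) ∈ U_{12n+4} : u ≡ 1 (mod 3) and v ≡ 1 (mod 3)}. -/
/-- `U k` is the set of integer solutions of `x² + 3y² = k`. -/
def U (k : ℤ) : Set (ℤ × ℤ) := {p | p.1 ^ 2 + 3 * p.2 ^ 2 = k}

/-- `C n` is the set of characteristic vectors of 3-core partitions of `n`. -/
def C (n : ℤ) : Set (ℤ × ℤ) :=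
  {p | 3 * p.1 ^ 2 + 3 * p.1 * p.2 + 3 * p.2 ^ 2 + p.1 + 2 * p.2 = n}

/-- The map `ϑ(x,y) = (6x+3y+1, 3y+1)`. -/
def theta : ℤ × ℤ → ℤ × ℤ := fun p => (6 * p.1 + 3 * p.2 + 1, 3 * p.2 + 1)

theorem stmt1 (n : ℕ) :
    Set.BijOn theta (C (n : ℤ))
      {p ∈ U (12 * n + 4) | p.1 ≡ 1 [ZMOD 3] ∧ p.2 ≡ 1 [ZMOD 3]} := by
  refine ⟨?_, ?_, ?_⟩
  · -- MapsTo
    intro p hp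
    simp only [C, Set.mem_setOf_eq] at hp
    refine ⟨?_, ?_, ?_⟩
    · simp only [U, theta, Set.mem_setOf_eq]
      linear_combination 12 * hp
    · show (6 * p.1 + 3 * p.2 + 1) % 3 = 1 % 3
      omega
    · show (3 * p.2 + 1) % 3 = 1 % 3
      omega
  · -- InjOn
    intro p _ q _ h
    simp only [theta, Prod.mk.injEq] at h
    obtain ⟨h1, h2⟩ := h
    have e1 : p.1 = q.1 := by omega
    have e2 : p.2 = q.2 := by omega
    exact Prod.ext e1 e2
  · -- SurjOn
    intro q hq
    obtain ⟨hU, h1, h2⟩ := hq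
    simp only [U, Set.mem_setOf_eq] at hU
    have d1 : (3 : ℤ) ∣ q.1 - 1 := Int.ModEq.dvd h1.symm
    have d2 : (3 : ℤ) ∣ q.2 - 1 := Int.ModEq.dvd h2.symm
    obtain ⟨a, ha⟩ : ∃ a : ℤ, q.1 = 3 * a + 1 := ⟨(q.1 - 1) / 3, by omega⟩
    obtain ⟨y, hy⟩ : ∃ y : ℤ, q.2 = 3 * y + 1 := ⟨(q.2 - 1) / 3, by omega⟩
    rw [ha, hy] at hU
    have h4 : 3 * a ^ 2 + 2 * a + 9 * y ^ 2 + 6 * y = 4 * (n : ℤ) := by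
      have h3 : 3 * (3 * a ^ 2 + 2 * a + 9 * y ^ 2 + 6 * y) = 3 * (4 * (n : ℤ)) := by
        linear_combination hU
      omega
    -- parity: a ≡ y (mod 2)
    have hpar : (2 : ℤ) ∣ a - y := by
      have hc : ((3 * a ^ 2 + 2 * a + 9 * y ^ 2 + 6 * y : ℤ) : ZMod 2)
          = ((4 * (n : ℤ) : ℤ) : ZMod 2) := by exact_mod_cast congrArg _ h4
      push_cast at hc
      have sa : ((a : ZMod 2)) ^ 2 = (a : ZMod 2) := ZMod.pow_card _
      have sy : ((y : ZMod 2)) ^ 2 = (y : ZMod 2) := ZMod.pow_card _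
      have hsum : ((a : ZMod 2) + (y : ZMod 2)) = 0 := by
        have h2' : (2 : ZMod 2) = 0 := by decide
        have h4' : (4 : ZMod 2) = 0 := by decide
        have h3' : (3 : ZMod 2) = 1 := by decide
        have h9' : (9 : ZMod 2) = 1 := by decide
        have h6' : (6 : ZMod 2) = 0 := by decide
        calc (a : ZMod 2) + y = 3 * (a:ZMod 2)^2 + 2*a + 9*(y:ZMod 2)^2 + 6*y := by
              rw [sa, sy, h3', h9', h2', h6']; ring
          _ = 4 * (n : ZMod 2) := hc
          _ = 0 := by rw [h4']; ring
      have : ((a + y : ℤ) : ZMod 2) = 0 := by push_cast; exact hsum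
      have := (ZMod.intCast_zmod_eq_zero_iff_dvd _ 2).mp this
      omega
    obtain ⟨x, hx⟩ : ∃ x : ℤ, a = y + 2 * x := ⟨(a - y) / 2, by omega⟩
    refine ⟨(x, y), ?_, ?_⟩
    · simp only [C, Set.mem_setOf_eq]
      have h5 : 4 * (3 * x ^ 2 + 3 * x * y + 3 * y ^ 2 + x + 2 * y) = 4 * (n : ℤ) := by
        rw [hx] at h4; linear_combination h4
      omega
    · simp only [theta]
      have hq' : q = (3 * a + 1, 3 * y + 1) := Prod.ext ha hy
      rw [hq', Prod.mk.injEq]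
      exact ⟨by omega, by omega⟩
end

section
/- Let n be a nonnegative integer. Then U_{12n+4} is exactly the set of all pairs (6x+3y+1, 3y+1), (3x−3y−1, 3x+3y+1), (−3x−6y−2, 3x), (−6x−3y−1, −3y−1), (−3x+3y+1, −3x−3y−1), (3x+6y+2, −3x), where (x,y) ranges over C_n. -/
set_option maxHeartbeats 1600000 in
theorem stmt2 (n : ℕ) :
    U (12 * n + 4) =
      {q | ∃ x y : ℤ, (x, y) ∈ C (n : ℤ) ∧
        (q = (6 * x + 3 * y + 1, 3 * y + 1) ∨
         q = (3 * x - 3 * y - 1, 3 * x + 3 * y + 1) ∨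
         q = (-3 * x - 6 * y - 2, 3 * x) ∨
         q = (-6 * x - 3 * y - 1, -3 * y - 1) ∨
         q = (-3 * x + 3 * y + 1, -3 * x - 3 * y - 1) ∨
         q = (3 * x + 6 * y + 2, -3 * x))} := by
  ext ⟨a, b⟩
  simp only [U, C, Set.mem_setOf_eq, Prod.mk.injEq]
  constructor
  · intro h
    -- a is not divisible by 3
    have h3 : ¬ (3 : ℤ) ∣ a := by
      rintro ⟨q, rfl⟩
      have : (3 : ℤ) ∣ 12 * n + 4 := ⟨3 * q ^ 2 + b ^ 2, by linear_combination -h⟩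
      omega
    -- a and b have the same parity
    have hp : a % 2 = b % 2 := by
      rcases Int.even_or_odd a with ⟨s, rfl⟩ | ⟨s, rfl⟩ <;>
        rcases Int.even_or_odd b with ⟨t, rfl⟩ | ⟨t, rfl⟩
      · omega
      · exfalso
        have : (4 : ℤ) * (s ^ 2 + 3 * t ^ 2 + 3 * t - 3 * n) = 1 := by
          linear_combination h
        omega
      · exfalso
        have : (4 : ℤ) * (s ^ 2 + s + 3 * t ^ 2 - 3 * n) = 3 := by
          linear_combination h
        omega
      · omega
    have h3' : a % 3 = 1 ∨ a % 3 = 2 := by omega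
    have hb3 : b % 3 = 0 ∨ b % 3 = 1 ∨ b % 3 = 2 := by omega
    rcases h3' with ha3 | ha3 <;> rcases hb3 with hb3 | hb3 | hb3
    · -- a ≡ 1, b ≡ 0 : case 3
      obtain ⟨x, y, rfl, rfl⟩ : ∃ x y : ℤ, a = -3*x - 6*y - 2 ∧ b = 3*x :=
        ⟨b / 3, (-a - b - 2) / 6, by omega, by omega⟩
      refine ⟨x, y, ?_, by tauto⟩
      have : (12 : ℤ) * (3 * x ^ 2 + 3 * x * y + 3 * y ^ 2 + x + 2 * y) = 12 * n := by
        linear_combination h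
      linarith
    · -- a ≡ 1, b ≡ 1 : case 1
      obtain ⟨x, y, rfl, rfl⟩ : ∃ x y : ℤ, a = 6*x + 3*y + 1 ∧ b = 3*y + 1 :=
        ⟨(a - b) / 6, (b - 1) / 3, by omega, by omega⟩
      refine ⟨x, y, ?_, by tauto⟩
      have : (12 : ℤ) * (3 * x ^ 2 + 3 * x * y + 3 * y ^ 2 + x + 2 * y) = 12 * n := by
        linear_combination h
      linarith
    · -- a ≡ 1, b ≡ 2 : case 5
      obtain ⟨x, y, rfl, rfl⟩ : ∃ x y : ℤ, a = -3*x + 3*y + 1 ∧ b = -3*x - 3*y - 1 :=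
        ⟨(-a - b) / 6, (a - b - 2) / 6, by omega, by omega⟩
      refine ⟨x, y, ?_, by tauto⟩
      have : (12 : ℤ) * (3 * x ^ 2 + 3 * x * y + 3 * y ^ 2 + x + 2 * y) = 12 * n := by
        linear_combination h
      linarith
    · -- a ≡ 2, b ≡ 0 : case 6
      obtain ⟨x, y, rfl, rfl⟩ : ∃ x y : ℤ, a = 3*x + 6*y + 2 ∧ b = -3*x :=
        ⟨-b / 3, (a + b - 2) / 6, by omega, by omega⟩
      refine ⟨x, y, ?_, by tauto⟩
      have : (12 : ℤ) * (3 * x ^ 2 + 3 * x * y + 3 * y ^ 2 + x + 2 * y) = 12 * n := by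
        linear_combination h
      linarith
    · -- a ≡ 2, b ≡ 1 : case 2
      obtain ⟨x, y, rfl, rfl⟩ : ∃ x y : ℤ, a = 3*x - 3*y - 1 ∧ b = 3*x + 3*y + 1 :=
        ⟨(a + b) / 6, (b - a - 2) / 6, by omega, by omega⟩
      refine ⟨x, y, ?_, by tauto⟩
      have : (12 : ℤ) * (3 * x ^ 2 + 3 * x * y + 3 * y ^ 2 + x + 2 * y) = 12 * n := by
        linear_combination h
      linarith
    · -- a ≡ 2, b ≡ 2 : case 4
      obtain ⟨x, y, rfl, rfl⟩ : ∃ x y : ℤ, a = -6*x - 3*y - 1 ∧ b = -3*y - 1 :=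
        ⟨(b - a) / 6, (-b - 1) / 3, by omega, by omega⟩
      refine ⟨x, y, ?_, by tauto⟩
      have : (12 : ℤ) * (3 * x ^ 2 + 3 * x * y + 3 * y ^ 2 + x + 2 * y) = 12 * n := by
        linear_combination h
      linarith
  · rintro ⟨x, y, hC, h⟩
    rcases h with ⟨rfl, rfl⟩ | ⟨rfl, rfl⟩ | ⟨rfl, rfl⟩ | ⟨rfl, rfl⟩ | ⟨rfl, rfl⟩ | ⟨rfl, rfl⟩ <;>
      linear_combination 12 * hC
end

section
/- Let n be a nonnegative integer. Then the number of integer solutions of x² + 3y² = 12n+4 equals 6 times the number of 3-core partitions of n; that is, |U_{12n+4}| = 6·|C_n| (both sets being finite). -/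
namespace Stmt3Aux

def T0 (p : ℤ × ℤ) : ℤ × ℤ := (6*p.1+3*p.2+1, 3*p.2+1)
def T1 (p : ℤ × ℤ) : ℤ × ℤ := (3*p.1-3*p.2-1, 3*p.1+3*p.2+1)
def T2 (p : ℤ × ℤ) : ℤ × ℤ := (-3*p.1-6*p.2-2, 3*p.1)
def T3 (p : ℤ × ℤ) : ℤ × ℤ := (-6*p.1-3*p.2-1, -3*p.2-1)
def T4 (p : ℤ × ℤ) : ℤ × ℤ := (-3*p.1+3*p.2+1, -3*p.1-3*p.2-1)
def T5 (p : ℤ × ℤ) : ℤ × ℤ := (3*p.1+6*p.2+2, -3*p.1)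

lemma inj0 : Function.Injective T0 := by
  rintro ⟨a,b⟩ ⟨c,d⟩ h
  simp only [T0, Prod.mk.injEq] at h
  exact Prod.ext_iff.mpr ⟨by omega, by omega⟩

lemma inj1 : Function.Injective T1 := by
  rintro ⟨a,b⟩ ⟨c,d⟩ h
  simp only [T1, Prod.mk.injEq] at h
  exact Prod.ext_iff.mpr ⟨by omega, by omega⟩

lemma inj2 : Function.Injective T2 := by
  rintro ⟨a,b⟩ ⟨c,d⟩ h
  simp only [T2, Prod.mk.injEq] at h
  exact Prod.ext_iff.mpr ⟨by omega, by omega⟩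

lemma inj3 : Function.Injective T3 := by
  rintro ⟨a,b⟩ ⟨c,d⟩ h
  simp only [T3, Prod.mk.injEq] at h
  exact Prod.ext_iff.mpr ⟨by omega, by omega⟩

lemma inj4 : Function.Injective T4 := by
  rintro ⟨a,b⟩ ⟨c,d⟩ h
  simp only [T4, Prod.mk.injEq] at h
  exact Prod.ext_iff.mpr ⟨by omega, by omega⟩

lemma inj5 : Function.Injective T5 := by
  rintro ⟨a,b⟩ ⟨c,d⟩ h
  simp only [T5, Prod.mk.injEq] at h
  exact Prod.ext_iff.mpr ⟨by omega, by omega⟩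

/-- residue signatures of the images -/
lemma sig0 {s : Set (ℤ×ℤ)} {p : ℤ×ℤ} (h : p ∈ T0 '' s) : p.1 % 3 = 1 ∧ p.2 % 3 = 1 := by
  obtain ⟨⟨u,v⟩, -, rfl⟩ := h; simp only [T0]; omega

lemma sig1 {s : Set (ℤ×ℤ)} {p : ℤ×ℤ} (h : p ∈ T1 '' s) : p.1 % 3 = 2 ∧ p.2 % 3 = 1 := by
  obtain ⟨⟨u,v⟩, -, rfl⟩ := h; simp only [T1]; omega

lemma sig2 {s : Set (ℤ×ℤ)} {p : ℤ×ℤ} (h : p ∈ T2 '' s) : p.1 % 3 = 1 ∧ p.2 % 3 = 0 := by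
  obtain ⟨⟨u,v⟩, -, rfl⟩ := h; simp only [T2]; omega

lemma sig3 {s : Set (ℤ×ℤ)} {p : ℤ×ℤ} (h : p ∈ T3 '' s) : p.1 % 3 = 2 ∧ p.2 % 3 = 2 := by
  obtain ⟨⟨u,v⟩, -, rfl⟩ := h; simp only [T3]; omega

lemma sig4 {s : Set (ℤ×ℤ)} {p : ℤ×ℤ} (h : p ∈ T4 '' s) : p.1 % 3 = 1 ∧ p.2 % 3 = 2 := by
  obtain ⟨⟨u,v⟩, -, rfl⟩ := h; simp only [T4]; omega

lemma sig5 {s : Set (ℤ×ℤ)} {p : ℤ×ℤ} (h : p ∈ T5 '' s) : p.1 % 3 = 2 ∧ p.2 % 3 = 0 := by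
  obtain ⟨⟨u,v⟩, -, rfl⟩ := h; simp only [T5]; omega

/-- parity: any solution of `x²+3y² = 12n+4` has `x ≡ y (mod 2)`. -/
lemma parity {n : ℕ} {x y : ℤ} (h : x^2 + 3*y^2 = 12*(n:ℤ)+4) : (2:ℤ) ∣ x - y := by
  have h1 : (2:ℤ) ∣ x^2 - x := by
    obtain ⟨c, hc⟩ := Int.even_mul_succ_self (x-1)
    exact ⟨c, by linear_combination hc⟩
  have h2 : (2:ℤ) ∣ y^2 + y := by
    obtain ⟨c, hc⟩ := Int.even_mul_succ_self y
    exact ⟨c, by linear_combination hc⟩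
  obtain ⟨a, ha⟩ := h1
  obtain ⟨b, hb⟩ := h2
  generalize x^2 = A at h ha
  generalize y^2 = B at h hb
  omega

/-- no solution has `3 ∣ x`. -/
lemma mod3 {n : ℕ} {x y : ℤ} (h : x^2 + 3*y^2 = 12*(n:ℤ)+4) : ¬ (3:ℤ) ∣ x := by
  rintro ⟨a, rfl⟩
  have h' : 9*a^2 + 3*y^2 = 12*(n:ℤ)+4 := by linarith
  have ha := sq_nonneg a
  generalize a^2 = A at h' ha
  generalize y^2 = B at h'
  omega

end Stmt3Aux

open Stmt3Aux in
theorem stmt3 (n : ℕ) :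
    (U (12 * n + 4)).Finite ∧ (C (n : ℤ)).Finite ∧
    (U (12 * n + 4)).ncard = 6 * (C (n : ℤ)).ncard := by
  have hn0 : (0:ℤ) ≤ (n:ℤ) := Int.natCast_nonneg n
  -- finiteness of U
  have hU_fin : (U (12 * n + 4)).Finite := by
    apply Set.Finite.subset
      (Set.finite_Icc ((-(12*(n:ℤ)+4), -(12*(n:ℤ)+4)) : ℤ×ℤ) (12*(n:ℤ)+4, 12*(n:ℤ)+4))
    rintro ⟨x, y⟩ h
    simp only [U, Set.mem_setOf_eq] at h
    simp only [Set.mem_Icc, Prod.mk_le_mk]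
    refine ⟨⟨?_, ?_⟩, ?_, ?_⟩ <;>
      nlinarith [sq_nonneg (x-1), sq_nonneg (x+1), sq_nonneg (y-1), sq_nonneg (y+1),
        sq_nonneg x, sq_nonneg y]
  -- the six image sets
  set S0 := T0 '' C (n:ℤ) with hS0def
  set S1 := T1 '' C (n:ℤ) with hS1def
  set S2 := T2 '' C (n:ℤ) with hS2def
  set S3 := T3 '' C (n:ℤ) with hS3def
  set S4 := T4 '' C (n:ℤ) with hS4def
  set S5 := T5 '' C (n:ℤ) with hS5def
  -- the cover
  have hcover : U (12 * n + 4) = S0 ∪ S1 ∪ S2 ∪ S3 ∪ S4 ∪ S5 := by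
    ext ⟨x, y⟩
    constructor
    · intro hp
      simp only [U, Set.mem_setOf_eq] at hp
      have hpar : (2:ℤ) ∣ x - y := parity hp
      have hx3 : ¬ (3:ℤ) ∣ x := mod3 hp
      have hxc : x % 3 = 1 ∨ x % 3 = 2 := by omega
      have hyc : y % 3 = 0 ∨ y % 3 = 1 ∨ y % 3 = 2 := by omega
      rcases hxc with hx1 | hx2
      · rcases hyc with hy0 | hy1 | hy2
        · -- (1,0) : T2, u = y/3, v = (-x-y-2)/6
          obtain ⟨u, hu⟩ : ∃ u : ℤ, y = 3*u := by
            obtain ⟨u, hu⟩ := (show (3:ℤ) ∣ y by omega); exact ⟨u, hu⟩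
          obtain ⟨v, hv⟩ : ∃ v : ℤ, x = -3*u-6*v-2 := by
            obtain ⟨v, hv⟩ := (show (6:ℤ) ∣ -x-y-2 by omega); exact ⟨v, by omega⟩
          subst hu hv
          refine Or.inl (Or.inl (Or.inl (Or.inr ⟨(u,v), ?_, rfl⟩)))
          simp only [C, Set.mem_setOf_eq]
          exact mul_left_cancel₀ (by norm_num : (12:ℤ) ≠ 0) (by linear_combination hp)
        · -- (1,1) : T0
          obtain ⟨v, hv⟩ : ∃ v : ℤ, y = 3*v+1 := by
            obtain ⟨v, hv⟩ := (show (3:ℤ) ∣ y - 1 by omega); exact ⟨v, by omega⟩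
          obtain ⟨u, hu⟩ : ∃ u : ℤ, x = 6*u+3*v+1 := by
            obtain ⟨u, hu⟩ := (show (6:ℤ) ∣ x - y by omega); exact ⟨u, by omega⟩
          subst hv hu
          refine Or.inl (Or.inl (Or.inl (Or.inl (Or.inl ⟨(u,v), ?_, rfl⟩))))
          simp only [C, Set.mem_setOf_eq]
          exact mul_left_cancel₀ (by norm_num : (12:ℤ) ≠ 0) (by linear_combination hp)
        · -- (1,2) : T4, x=-3u+3v+1, y=-3u-3v-1
          obtain ⟨u, hu⟩ : ∃ u : ℤ, x + y = -6*u := by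
            obtain ⟨u, hu⟩ := (show (6:ℤ) ∣ x + y by omega); exact ⟨-u, by omega⟩
          obtain ⟨v, hv⟩ : ∃ v : ℤ, x = -3*u+3*v+1 := by
            obtain ⟨v, hv⟩ := (show (6:ℤ) ∣ x - y - 2 by omega); exact ⟨v, by omega⟩
          have hy : y = -3*u-3*v-1 := by omega
          subst hv hy
          refine Or.inl (Or.inr ⟨(u,v), ?_, rfl⟩)
          simp only [C, Set.mem_setOf_eq]
          exact mul_left_cancel₀ (by norm_num : (12:ℤ) ≠ 0) (by linear_combination hp)
      · rcases hyc with hy0 | hy1 | hy2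
        · -- (2,0) : T5, u = -y/3, x = 3u+6v+2
          obtain ⟨u, hu⟩ : ∃ u : ℤ, y = -3*u := by
            obtain ⟨u, hu⟩ := (show (3:ℤ) ∣ y by omega); exact ⟨-u, by omega⟩
          obtain ⟨v, hv⟩ : ∃ v : ℤ, x = 3*u+6*v+2 := by
            obtain ⟨v, hv⟩ := (show (6:ℤ) ∣ x + y - 2 by omega); exact ⟨v, by omega⟩
          subst hu hv
          refine Or.inr ⟨(u,v), ?_, rfl⟩
          simp only [C, Set.mem_setOf_eq]
          exact mul_left_cancel₀ (by norm_num : (12:ℤ) ≠ 0) (by linear_combination hp)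
        · -- (2,1) : T1, x=3u-3v-1, y=3u+3v+1
          obtain ⟨u, hu⟩ : ∃ u : ℤ, x + y = 6*u := by
            obtain ⟨u, hu⟩ := (show (6:ℤ) ∣ x + y by omega); exact ⟨u, hu⟩
          obtain ⟨v, hv⟩ : ∃ v : ℤ, x = 3*u-3*v-1 := by
            obtain ⟨v, hv⟩ := (show (6:ℤ) ∣ y - x - 2 by omega); exact ⟨v, by omega⟩
          have hy : y = 3*u+3*v+1 := by omega
          subst hv hy
          refine Or.inl (Or.inl (Or.inl (Or.inl (Or.inr ⟨(u,v), ?_, rfl⟩))))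
          simp only [C, Set.mem_setOf_eq]
          exact mul_left_cancel₀ (by norm_num : (12:ℤ) ≠ 0) (by linear_combination hp)
        · -- (2,2) : T3, x=-6u-3v-1, y=-3v-1
          obtain ⟨v, hv⟩ : ∃ v : ℤ, y = -3*v-1 := by
            obtain ⟨v, hv⟩ := (show (3:ℤ) ∣ y + 1 by omega); exact ⟨-v, by omega⟩
          obtain ⟨u, hu⟩ : ∃ u : ℤ, x = -6*u-3*v-1 := by
            obtain ⟨u, hu⟩ := (show (6:ℤ) ∣ y - x by omega); exact ⟨u, by omega⟩
          subst hv hu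
          refine Or.inl (Or.inl (Or.inr ⟨(u,v), ?_, rfl⟩))
          simp only [C, Set.mem_setOf_eq]
          exact mul_left_cancel₀ (by norm_num : (12:ℤ) ≠ 0) (by linear_combination hp)
    · intro hp
      simp only [U, Set.mem_setOf_eq]
      rcases hp with ((((h | h) | h) | h) | h) | h <;>
        obtain ⟨⟨u,v⟩, hc, heq⟩ := h <;>
        simp only [C, Set.mem_setOf_eq] at hc <;>
        simp only [T0, T1, T2, T3, T4, T5, Prod.mk.injEq] at heq <;>
        obtain ⟨rfl, rfl⟩ := heq <;>
        linear_combination 12 * hc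
  -- finiteness of C
  have hS0U : S0 ⊆ U (12 * n + 4) := by
    rw [hcover]
    exact ((((Set.subset_union_left.trans Set.subset_union_left).trans
      Set.subset_union_left).trans Set.subset_union_left).trans Set.subset_union_left)
  have hC_fin : (C (n:ℤ)).Finite :=
    Set.Finite.of_finite_image (hU_fin.subset hS0U) inj0.injOn
  refine ⟨hU_fin, hC_fin, ?_⟩
  -- finiteness of the pieces
  have f0 : S0.Finite := hC_fin.image _
  have f1 : S1.Finite := hC_fin.image _
  have f2 : S2.Finite := hC_fin.image _
  have f3 : S3.Finite := hC_fin.image _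
  have f4 : S4.Finite := hC_fin.image _
  have f5 : S5.Finite := hC_fin.image _
  -- disjointness
  have d45 : Disjoint S4 S5 := Set.disjoint_left.mpr (by
    intro p h4 h5; have := sig4 h4; have := sig5 h5; omega)
  have d3 : Disjoint S3 (S4 ∪ S5) := Set.disjoint_left.mpr (by
    intro p h3 h; have := sig3 h3
    rcases h with h | h
    · have := sig4 h; omega
    · have := sig5 h; omega)
  have d2 : Disjoint S2 (S3 ∪ S4 ∪ S5) := Set.disjoint_left.mpr (by
    intro p h2 h; have := sig2 h2
    rcases h with (h | h) | h
    · have := sig3 h; omega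
    · have := sig4 h; omega
    · have := sig5 h; omega)
  have d1 : Disjoint S1 (S2 ∪ S3 ∪ S4 ∪ S5) := Set.disjoint_left.mpr (by
    intro p h1 h; have := sig1 h1
    rcases h with ((h | h) | h) | h
    · have := sig2 h; omega
    · have := sig3 h; omega
    · have := sig4 h; omega
    · have := sig5 h; omega)
  have d0 : Disjoint S0 (S1 ∪ S2 ∪ S3 ∪ S4 ∪ S5) := Set.disjoint_left.mpr (by
    intro p h0 h; have := sig0 h0
    rcases h with (((h | h) | h) | h) | h
    · have := sig1 h; omega
    · have := sig2 h; omega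
    · have := sig3 h; omega
    · have := sig4 h; omega
    · have := sig5 h; omega)
  -- counting
  have e0 : S0.ncard = (C (n:ℤ)).ncard := Set.ncard_image_of_injective _ inj0
  have e1 : S1.ncard = (C (n:ℤ)).ncard := Set.ncard_image_of_injective _ inj1
  have e2 : S2.ncard = (C (n:ℤ)).ncard := Set.ncard_image_of_injective _ inj2
  have e3 : S3.ncard = (C (n:ℤ)).ncard := Set.ncard_image_of_injective _ inj3
  have e4 : S4.ncard = (C (n:ℤ)).ncard := Set.ncard_image_of_injective _ inj4
  have e5 : S5.ncard = (C (n:ℤ)).ncard := Set.ncard_image_of_injective _ inj5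
  rw [hcover]
  rw [show S0 ∪ S1 ∪ S2 ∪ S3 ∪ S4 ∪ S5
      = S0 ∪ (S1 ∪ (S2 ∪ (S3 ∪ (S4 ∪ S5)))) by
    simp [Set.union_assoc]]
  rw [Set.ncard_union_eq (by simpa [Set.union_assoc] using d0) f0
      (f1.union (f2.union (f3.union (f4.union f5))))]
  rw [Set.ncard_union_eq (by simpa [Set.union_assoc] using d1) f1
      (f2.union (f3.union (f4.union f5)))]
  rw [Set.ncard_union_eq (by simpa [Set.union_assoc] using d2) f2
      (f3.union (f4.union f5))]
  rw [Set.ncard_union_eq (by simpa [Set.union_assoc] using d3) f3 (f4.union f5)]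
  rw [Set.ncard_union_eq d45 f4 f5]
  rw [e0, e1, e2, e3, e4, e5]
  ring
end

section
/- Let k be a positive even integer. Then the number of integer solutions of x² + 3y² = k is divisible by 6, i.e. 6 divides |U_k|. -/
open MulAction in
lemma aux_dvd {α : Type*} [Finite α] (p : ℕ) [Fact p.Prime]
    (f : Equiv.Perm α) (hf : f ^ p = 1) (hfix : ∀ x, f x ≠ x) :
    p ∣ Nat.card α := by
  classical
  set G := Subgroup.zpowers f with hG
  have hpG : IsPGroup p G := by
    intro g
    refine ⟨1, ?_⟩
    obtain ⟨n, hn⟩ := g.2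
    ext1
    push_cast
    rw [← hn]
    simp only [pow_one]
    rw [← zpow_natCast, ← zpow_mul, mul_comm, zpow_mul, zpow_natCast, hf, one_zpow]
  have hfix' : fixedPoints G α = ∅ := by
    ext x
    simp only [Set.mem_empty_iff_false, iff_false, mem_fixedPoints]
    intro h
    exact hfix x (h ⟨f, Subgroup.mem_zpowers f⟩)
  have hmod := hpG.card_modEq_card_fixedPoints α
  have h0 : Nat.card (fixedPoints G α) = 0 := by rw [hfix']; simp
  rw [h0] at hmod
  exact Nat.modEq_zero_iff_dvd.mp hmod

/-- rotation by a 6th (here: cube) root of unity -/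
def tmap : ℤ × ℤ → ℤ × ℤ := fun q => ((-q.1 - 3 * q.2) / 2, (q.1 - q.2) / 2)

lemma tmap_eval (y a : ℤ) : tmap (y + 2 * a, y) = (-2 * y - a, a) := by
  unfold tmap
  simp only [Prod.mk.injEq]
  constructor <;> omega

theorem stmt6 (k : ℤ) (hk0 : 0 < k) (hk : Even k) : 6 ∣ (U k).ncard := by
  classical
  -- finiteness
  have hfin : (U k).Finite := by
    apply Set.Finite.subset ((Set.finite_Icc (-k) k).prod (Set.finite_Icc (-k) k))
    rintro ⟨x, y⟩ h
    have h' : x ^ 2 + 3 * y ^ 2 = k := h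
    constructor <;> constructor <;> nlinarith [sq_nonneg x, sq_nonneg y, sq_nonneg (x - k), sq_nonneg (x + k), sq_nonneg (y - k), sq_nonneg (y + k)]
  have : Finite (U k) := hfin.to_subtype
  -- evenness of x - y on U k
  have heven : ∀ q : ℤ × ℤ, q ∈ U k → 2 ∣ q.1 - q.2 := by
    rintro ⟨x, y⟩ h
    have h' : x ^ 2 + 3 * y ^ 2 = k := h
    obtain ⟨a, ha⟩ := Int.even_mul_succ_self x
    obtain ⟨b, hb⟩ := Int.even_mul_succ_self y
    obtain ⟨c, hc⟩ := hk
    have hx : x ^ 2 = a + a - x := by nlinarith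
    have hy : y ^ 2 = b + b - y := by nlinarith
    omega
  -- the negation permutation, order 2
  have negmem : ∀ q : ℤ × ℤ, q ∈ U k → (-q.1, -q.2) ∈ U k := by
    rintro ⟨x, y⟩ h
    have h' : x ^ 2 + 3 * y ^ 2 = k := h
    show (-x) ^ 2 + 3 * (-y) ^ 2 = k
    linear_combination h'
  let negf : Equiv.Perm (U k) :=
    { toFun := fun p => ⟨(-p.1.1, -p.1.2), negmem p.1 p.2⟩
      invFun := fun p => ⟨(-p.1.1, -p.1.2), negmem p.1 p.2⟩
      left_inv := fun p => by ext <;> simp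
      right_inv := fun p => by ext <;> simp }
  have hneg2 : negf ^ 2 = 1 := by
    apply Equiv.ext
    intro p
    apply Subtype.ext
    simp only [pow_succ, pow_zero, one_mul, Equiv.Perm.mul_apply, Equiv.Perm.one_apply]
    show ((-(-p.1.1), -(-p.1.2)) : ℤ × ℤ) = p.1
    simp
  have hnegfix : ∀ p : (U k), negf p ≠ p := by
    rintro ⟨⟨x, y⟩, hp⟩ h
    have h' : x ^ 2 + 3 * y ^ 2 = k := hp
    rw [Subtype.ext_iff, Prod.ext_iff] at h
    simp only [negf, Equiv.coe_fn_mk] at h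
    obtain ⟨h1, h2⟩ := h
    have hx : x = 0 := by omega
    have hy : y = 0 := by omega
    subst hx; subst hy
    simp at h'
    omega
  -- tmap permutation, order 3
  have tmem : ∀ q : ℤ × ℤ, q ∈ U k → tmap q ∈ U k := by
    rintro ⟨x, y⟩ h
    obtain ⟨a, ha⟩ := heven (x, y) h
    have hx : x = y + 2 * a := by omega
    subst hx
    have h' : (y + 2 * a) ^ 2 + 3 * y ^ 2 = k := h
    rw [tmap_eval]
    show (-2 * y - a) ^ 2 + 3 * a ^ 2 = k
    linear_combination h'
  have t3 : ∀ q : ℤ × ℤ, q ∈ U k → tmap (tmap (tmap q)) = q := by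
    rintro ⟨x, y⟩ h
    obtain ⟨a, ha⟩ := heven (x, y) h
    have hx : x = y + 2 * a := by omega
    subst hx
    rw [tmap_eval]
    have e1 : ((-2 * y - a : ℤ), (a : ℤ)) = (a + 2 * (-(y + a)), a) := by
      simp only [Prod.mk.injEq]; exact ⟨by ring, trivial⟩
    rw [e1, tmap_eval]
    have e2 : ((-2 * a - -(y + a) : ℤ), (-(y + a) : ℤ)) = (-(y + a) + 2 * y, -(y + a)) := by
      simp only [Prod.mk.injEq]; exact ⟨by ring, trivial⟩
    rw [e2, tmap_eval]
    simp only [Prod.mk.injEq]; exact ⟨by ring, trivial⟩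
  let tf : Equiv.Perm (U k) :=
    { toFun := fun p => ⟨tmap p.1, tmem p.1 p.2⟩
      invFun := fun p => ⟨tmap (tmap p.1), tmem _ (tmem p.1 p.2)⟩
      left_inv := fun p => by ext1; exact t3 p.1 p.2
      right_inv := fun p => by ext1; exact t3 p.1 p.2 }
  have ht3 : tf ^ 3 = 1 := by
    apply Equiv.ext
    intro p
    apply Subtype.ext
    simp only [pow_succ, pow_zero, one_mul, Equiv.Perm.mul_apply, Equiv.Perm.one_apply]
    show tmap (tmap (tmap p.1)) = p.1
    exact t3 p.1 p.2
  have htfix : ∀ p : (U k), tf p ≠ p := by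
    rintro ⟨⟨x, y⟩, hp⟩ h
    have h' : x ^ 2 + 3 * y ^ 2 = k := hp
    obtain ⟨a, ha⟩ := heven (x, y) hp
    rw [Subtype.ext_iff, Prod.ext_iff] at h
    simp only [tf, Equiv.coe_fn_mk, tmap] at h
    obtain ⟨h1, h2⟩ := h
    have hx : x = 0 := by omega
    have hy : y = 0 := by omega
    subst hx; subst hy
    simp at h'
    omega
  have h2 : 2 ∣ Nat.card (U k) := aux_dvd 2 negf hneg2 hnegfix
  have h3 : 3 ∣ Nat.card (U k) := aux_dvd 3 tf ht3 htfix
  have h6 : 6 ∣ Nat.card (U k) := Nat.Coprime.mul_dvd_of_dvd_of_dvd (by norm_num) h2 h3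
  rwa [Nat.card_coe_set_eq] at h6
end

section
/- Let n be a nonnegative integer. For every pair of residues (a,b) ∈ {(1,1), (2,1), (1,0), (2,2), (1,2), (2,0)} modulo 3, the set {(x,y) ∈ U_{12n+4} : x ≡ a (mod 3) and y ≡ b (mod 3)} has cardinality |C_n|; moreover every (x,y) ∈ U_{12n+4} satisfies x ≢ 0 (mod 3), so these six fibers partition U_{12n+4} into sets of equal cardinality. -/
private lemma parity_aux {x y k : ℤ} (h : x ^ 2 + 3 * y ^ 2 = 2 * k) : x % 2 = y % 2 := by
  rcases Int.even_or_odd x with ⟨p, hp⟩ | ⟨p, hp⟩ <;>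
    rcases Int.even_or_odd y with ⟨q, hq⟩ | ⟨q, hq⟩ <;> subst hp <;> subst hq
  · omega
  · exfalso
    have h' : 4 * p ^ 2 + 12 * q ^ 2 + 12 * q + 3 = 2 * k := by linear_combination h
    obtain ⟨P, hP⟩ : ∃ P, p ^ 2 = P := ⟨_, rfl⟩
    obtain ⟨Q, hQ⟩ : ∃ Q, q ^ 2 = Q := ⟨_, rfl⟩
    rw [hP, hQ] at h'
    omega
  · exfalso
    have h' : 4 * p ^ 2 + 4 * p + 12 * q ^ 2 + 1 = 2 * k := by linear_combination h
    obtain ⟨P, hP⟩ : ∃ P, p ^ 2 = P := ⟨_, rfl⟩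
    obtain ⟨Q, hQ⟩ : ∃ Q, q ^ 2 = Q := ⟨_, rfl⟩
    rw [hP, hQ] at h'
    omega
  · omega

theorem stmt8 (n : ℕ) :
    (∀ a b : ℤ,
      (a, b) ∈ ({(1, 1), (2, 1), (1, 0), (2, 2), (1, 2), (2, 0)} : Set (ℤ × ℤ)) →
      {p ∈ U (12 * n + 4) | p.1 ≡ a [ZMOD 3] ∧ p.2 ≡ b [ZMOD 3]}.ncard =
        (C (n : ℤ)).ncard) ∧
    ∀ p ∈ U (12 * n + 4), ¬ (3 : ℤ) ∣ p.1 := by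
  constructor
  · intro a b hab
    simp only [Set.mem_insert_iff, Set.mem_singleton_iff, Prod.mk.injEq] at hab
    rcases hab with ⟨ha, hb⟩ | ⟨ha, hb⟩ | ⟨ha, hb⟩ | ⟨ha, hb⟩ | ⟨ha, hb⟩ | ⟨ha, hb⟩ <;>
        subst ha <;> subst hb
    · -- (1,1): (u,v) ↦ (6u+3v+1, 3v+1)
      have himg : {p ∈ U (12 * (n:ℤ) + 4) | p.1 ≡ 1 [ZMOD 3] ∧ p.2 ≡ 1 [ZMOD 3]} =
          (fun q : ℤ × ℤ => (6 * q.1 + 3 * q.2 + 1, 3 * q.2 + 1)) '' C (n : ℤ) := by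
        ext ⟨x, y⟩
        simp only [U, C, Set.mem_setOf_eq, Set.mem_sep_iff, Set.mem_image,
          Int.modEq_iff_dvd, Prod.mk.injEq]
        constructor
        · rintro ⟨hU, hx, hy⟩
          have hpar : x % 2 = y % 2 := parity_aux (k := 6 * n + 2) (by linear_combination hU)
          obtain ⟨v, hv⟩ : ∃ v, y = 3 * v + 1 := ⟨(y - 1) / 3, by omega⟩
          obtain ⟨u, hu⟩ : ∃ u, x = 6 * u + 3 * v + 1 := ⟨(x - 3 * v - 1) / 6, by omega⟩
          refine ⟨(u, v), ?_, by omega, by omega⟩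
          have h12 : (12:ℤ) * (3 * u ^ 2 + 3 * u * v + 3 * v ^ 2 + u + 2 * v) = 12 * n := by
            rw [hu, hv] at hU; linear_combination hU
          exact mul_left_cancel₀ (by norm_num) h12
        · rintro ⟨⟨u, v⟩, hC, h1, h2⟩
          subst h1; subst h2
          exact ⟨by linear_combination 12 * hC, by omega, by omega⟩
      rw [himg, Set.ncard_image_of_injective _ (by
        intro ⟨a, b⟩ ⟨c, d⟩ h; simp only [Prod.mk.injEq] at h ⊢; omega)]
    · -- (2,1): (u,v) ↦ (-6u-3v-1, 3v+1)
      have himg : {p ∈ U (12 * (n:ℤ) + 4) | p.1 ≡ 2 [ZMOD 3] ∧ p.2 ≡ 1 [ZMOD 3]} =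
          (fun q : ℤ × ℤ => (-6 * q.1 - 3 * q.2 - 1, 3 * q.2 + 1)) '' C (n : ℤ) := by
        ext ⟨x, y⟩
        simp only [U, C, Set.mem_setOf_eq, Set.mem_sep_iff, Set.mem_image,
          Int.modEq_iff_dvd, Prod.mk.injEq]
        constructor
        · rintro ⟨hU, hx, hy⟩
          have hpar : x % 2 = y % 2 := parity_aux (k := 6 * n + 2) (by linear_combination hU)
          obtain ⟨v, hv⟩ : ∃ v, y = 3 * v + 1 := ⟨(y - 1) / 3, by omega⟩
          obtain ⟨u, hu⟩ : ∃ u, x = -6 * u - 3 * v - 1 := ⟨(-x - 3 * v - 1) / 6, by omega⟩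
          refine ⟨(u, v), ?_, by omega, by omega⟩
          have h12 : (12:ℤ) * (3 * u ^ 2 + 3 * u * v + 3 * v ^ 2 + u + 2 * v) = 12 * n := by
            rw [hu, hv] at hU; linear_combination hU
          exact mul_left_cancel₀ (by norm_num) h12
        · rintro ⟨⟨u, v⟩, hC, h1, h2⟩
          subst h1; subst h2
          exact ⟨by linear_combination 12 * hC, by omega, by omega⟩
      rw [himg, Set.ncard_image_of_injective _ (by
        intro ⟨a, b⟩ ⟨c, d⟩ h; simp only [Prod.mk.injEq] at h ⊢; omega)]
    · -- (1,0): (u,v) ↦ (-3u-6v-2, -3u)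
      have himg : {p ∈ U (12 * (n:ℤ) + 4) | p.1 ≡ 1 [ZMOD 3] ∧ p.2 ≡ 0 [ZMOD 3]} =
          (fun q : ℤ × ℤ => (-3 * q.1 - 6 * q.2 - 2, -3 * q.1)) '' C (n : ℤ) := by
        ext ⟨x, y⟩
        simp only [U, C, Set.mem_setOf_eq, Set.mem_sep_iff, Set.mem_image,
          Int.modEq_iff_dvd, Prod.mk.injEq]
        constructor
        · rintro ⟨hU, hx, hy⟩
          have hpar : x % 2 = y % 2 := parity_aux (k := 6 * n + 2) (by linear_combination hU)
          obtain ⟨u, hu⟩ : ∃ u, y = -3 * u := ⟨-(y / 3), by omega⟩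
          obtain ⟨v, hv⟩ : ∃ v, x = -3 * u - 6 * v - 2 := ⟨(-x - 3 * u - 2) / 6, by omega⟩
          refine ⟨(u, v), ?_, by omega, by omega⟩
          have h12 : (12:ℤ) * (3 * u ^ 2 + 3 * u * v + 3 * v ^ 2 + u + 2 * v) = 12 * n := by
            rw [hu, hv] at hU; linear_combination hU
          exact mul_left_cancel₀ (by norm_num) h12
        · rintro ⟨⟨u, v⟩, hC, h1, h2⟩
          subst h1; subst h2
          exact ⟨by linear_combination 12 * hC, by omega, by omega⟩
      rw [himg, Set.ncard_image_of_injective _ (by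
        intro ⟨a, b⟩ ⟨c, d⟩ h; simp only [Prod.mk.injEq] at h ⊢; omega)]
    · -- (2,2): (u,v) ↦ (-6u-3v-1, -3v-1)
      have himg : {p ∈ U (12 * (n:ℤ) + 4) | p.1 ≡ 2 [ZMOD 3] ∧ p.2 ≡ 2 [ZMOD 3]} =
          (fun q : ℤ × ℤ => (-6 * q.1 - 3 * q.2 - 1, -3 * q.2 - 1)) '' C (n : ℤ) := by
        ext ⟨x, y⟩
        simp only [U, C, Set.mem_setOf_eq, Set.mem_sep_iff, Set.mem_image,
          Int.modEq_iff_dvd, Prod.mk.injEq]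
        constructor
        · rintro ⟨hU, hx, hy⟩
          have hpar : x % 2 = y % 2 := parity_aux (k := 6 * n + 2) (by linear_combination hU)
          obtain ⟨v, hv⟩ : ∃ v, y = -3 * v - 1 := ⟨(-y - 1) / 3, by omega⟩
          obtain ⟨u, hu⟩ : ∃ u, x = -6 * u - 3 * v - 1 := ⟨(-x - 3 * v - 1) / 6, by omega⟩
          refine ⟨(u, v), ?_, by omega, by omega⟩
          have h12 : (12:ℤ) * (3 * u ^ 2 + 3 * u * v + 3 * v ^ 2 + u + 2 * v) = 12 * n := by
            rw [hu, hv] at hU; linear_combination hU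
          exact mul_left_cancel₀ (by norm_num) h12
        · rintro ⟨⟨u, v⟩, hC, h1, h2⟩
          subst h1; subst h2
          exact ⟨by linear_combination 12 * hC, by omega, by omega⟩
      rw [himg, Set.ncard_image_of_injective _ (by
        intro ⟨a, b⟩ ⟨c, d⟩ h; simp only [Prod.mk.injEq] at h ⊢; omega)]
    · -- (1,2): (u,v) ↦ (6u+3v+1, -3v-1)
      have himg : {p ∈ U (12 * (n:ℤ) + 4) | p.1 ≡ 1 [ZMOD 3] ∧ p.2 ≡ 2 [ZMOD 3]} =
          (fun q : ℤ × ℤ => (6 * q.1 + 3 * q.2 + 1, -3 * q.2 - 1)) '' C (n : ℤ) := by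
        ext ⟨x, y⟩
        simp only [U, C, Set.mem_setOf_eq, Set.mem_sep_iff, Set.mem_image,
          Int.modEq_iff_dvd, Prod.mk.injEq]
        constructor
        · rintro ⟨hU, hx, hy⟩
          have hpar : x % 2 = y % 2 := parity_aux (k := 6 * n + 2) (by linear_combination hU)
          obtain ⟨v, hv⟩ : ∃ v, y = -3 * v - 1 := ⟨(-y - 1) / 3, by omega⟩
          obtain ⟨u, hu⟩ : ∃ u, x = 6 * u + 3 * v + 1 := ⟨(x - 3 * v - 1) / 6, by omega⟩
          refine ⟨(u, v), ?_, by omega, by omega⟩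
          have h12 : (12:ℤ) * (3 * u ^ 2 + 3 * u * v + 3 * v ^ 2 + u + 2 * v) = 12 * n := by
            rw [hu, hv] at hU; linear_combination hU
          exact mul_left_cancel₀ (by norm_num) h12
        · rintro ⟨⟨u, v⟩, hC, h1, h2⟩
          subst h1; subst h2
          exact ⟨by linear_combination 12 * hC, by omega, by omega⟩
      rw [himg, Set.ncard_image_of_injective _ (by
        intro ⟨a, b⟩ ⟨c, d⟩ h; simp only [Prod.mk.injEq] at h ⊢; omega)]
    · -- (2,0): (u,v) ↦ (3u+6v+2, 3u)
      have himg : {p ∈ U (12 * (n:ℤ) + 4) | p.1 ≡ 2 [ZMOD 3] ∧ p.2 ≡ 0 [ZMOD 3]} =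
          (fun q : ℤ × ℤ => (3 * q.1 + 6 * q.2 + 2, 3 * q.1)) '' C (n : ℤ) := by
        ext ⟨x, y⟩
        simp only [U, C, Set.mem_setOf_eq, Set.mem_sep_iff, Set.mem_image,
          Int.modEq_iff_dvd, Prod.mk.injEq]
        constructor
        · rintro ⟨hU, hx, hy⟩
          have hpar : x % 2 = y % 2 := parity_aux (k := 6 * n + 2) (by linear_combination hU)
          obtain ⟨u, hu⟩ : ∃ u, y = 3 * u := ⟨y / 3, by omega⟩
          obtain ⟨v, hv⟩ : ∃ v, x = 3 * u + 6 * v + 2 := ⟨(x - 3 * u - 2) / 6, by omega⟩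
          refine ⟨(u, v), ?_, by omega, by omega⟩
          have h12 : (12:ℤ) * (3 * u ^ 2 + 3 * u * v + 3 * v ^ 2 + u + 2 * v) = 12 * n := by
            rw [hu, hv] at hU; linear_combination hU
          exact mul_left_cancel₀ (by norm_num) h12
        · rintro ⟨⟨u, v⟩, hC, h1, h2⟩
          subst h1; subst h2
          exact ⟨by linear_combination 12 * hC, by omega, by omega⟩
      rw [himg, Set.ncard_image_of_injective _ (by
        intro ⟨a, b⟩ ⟨c, d⟩ h; simp only [Prod.mk.injEq] at h ⊢; omega)]
  · rintro ⟨x, y⟩ hp ⟨t, ht⟩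
    simp only [U, Set.mem_setOf_eq] at hp
    have ht' : x = 3 * t := ht
    rw [ht'] at hp
    have h' : 9 * t ^ 2 + 3 * y ^ 2 = 12 * n + 4 := by linear_combination hp
    obtain ⟨P, hP⟩ : ∃ P, t ^ 2 = P := ⟨_, rfl⟩
    obtain ⟨Q, hQ⟩ : ∃ Q, y ^ 2 = Q := ⟨_, rfl⟩
    rw [hP, hQ] at h'
    omega
end

section
/- Let n be a nonnegative integer. The equation x² + 3y² = 12n+4 has an integer solution if and only if for every prime p with p ≡ 2 (mod 3), the p-adic valuation ν_p(3n+1) is even. -/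
/-- If `t² + t + 1 = 0` in `ZMod p` for a prime `p ≠ 3`, then `p ≡ 1 mod 3`. -/
lemma aux_ord3 {p : ℕ} (hp : p.Prime) (hp3 : p ≠ 3) {t : ZMod p}
    (h1 : t * t + t + 1 = 0) : p % 3 = 1 := by
  haveI : Fact p.Prime := ⟨hp⟩
  have ht1 : t ≠ 1 := by
    rintro rfl
    have h3 : ((3 : ℕ) : ZMod p) = 0 := by push_cast; linear_combination h1
    have := (ZMod.natCast_eq_zero_iff 3 p).mp h3
    rcases (Nat.prime_dvd_prime_iff_eq hp Nat.prime_three).mp this with rfl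
    exact hp3 rfl
  have hinv : t * (-(t + 1)) = 1 := by linear_combination -h1
  let u : (ZMod p)ˣ := ⟨t, -(t+1), hinv, by linear_combination -h1⟩
  have hu3 : u ^ 3 = 1 := by
    ext
    show t ^ 3 = 1
    linear_combination (t - 1) * h1
  have hord : orderOf u = 3 := by
    have hdvd : orderOf u ∣ 3 := orderOf_dvd_of_pow_eq_one hu3
    rcases (Nat.Prime.eq_one_or_self_of_dvd Nat.prime_three _ hdvd) with h | h
    · exfalso
      have : u = 1 := orderOf_eq_one_iff.mp h
      apply ht1
      have := congrArg (Units.val) this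
      exact this
    · exact h
  have hcard : orderOf u ∣ Fintype.card (ZMod p)ˣ := orderOf_dvd_card
  rw [hord, ZMod.card_units] at hcard
  have := hp.two_le
  omega


/-- Descent: a prime `p ≡ 2 mod 3` dividing `a² + ab + b²` divides both `a` and `b`. -/
lemma aux_descent {p : ℕ} (hp : p.Prime) (hp2 : p % 3 = 2) {a b : ℤ}
    (h : (p : ℤ) ∣ a ^ 2 + a * b + b ^ 2) : (p : ℤ) ∣ a ∧ (p : ℤ) ∣ b := by
  haveI : Fact p.Prime := ⟨hp⟩
  have h0 : ((a : ZMod p)) ^ 2 + (a : ZMod p) * (b : ZMod p) + (b : ZMod p) ^ 2 = 0 := by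
    have := (ZMod.intCast_zmod_eq_zero_iff_dvd _ p).mpr h
    push_cast at this
    linear_combination this
  have hb : (b : ZMod p) = 0 := by
    by_contra hb
    set t : ZMod p := (a : ZMod p) * (b : ZMod p)⁻¹ with ht
    have h1 : t * t + t + 1 = 0 := by
      have hbi : (b : ZMod p) * (b : ZMod p)⁻¹ = 1 := ZMod.mul_inv_of_unit _ (Ne.isUnit hb)
      rw [ht]
      linear_combination ((b : ZMod p)⁻¹)^2 * h0 -
        ((a : ZMod p)*(b : ZMod p)⁻¹ + 1 + (b : ZMod p)*(b : ZMod p)⁻¹) * hbi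
    have := aux_ord3 hp (by omega) h1
    omega
  have ha : (a : ZMod p) = 0 := by
    rw [hb] at h0
    ring_nf at h0
    exact pow_eq_zero_iff (n := 2) (by norm_num) |>.mp (by linear_combination h0)
  exact ⟨(ZMod.intCast_zmod_eq_zero_iff_dvd _ p).mp ha, (ZMod.intCast_zmod_eq_zero_iff_dvd _ p).mp hb⟩

/-- For `p ≡ 1 mod 3`, there is a primitive cube root of unity mod p. -/
lemma aux_cube_root {p : ℕ} (hp : p.Prime) (hp1 : p % 3 = 1) :
    ∃ w : ZMod p, w * w + w + 1 = 0 := by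
  haveI : Fact p.Prime := ⟨hp⟩
  have h3 : 3 ∣ Fintype.card (ZMod p)ˣ := by
    rw [ZMod.card_units]
    have := hp.two_le
    omega
  obtain ⟨u, hu⟩ := exists_prime_orderOf_dvd_card 3 h3
  refine ⟨(u : ZMod p), ?_⟩
  have hu3 : (u : ZMod p) ^ 3 = 1 := by
    have : u ^ 3 = 1 := by rw [← hu]; exact pow_orderOf_eq_one u
    rw [← Units.val_pow_eq_pow_val, this, Units.val_one]
  have hne : (u : ZMod p) ≠ 1 := by
    intro h
    have : u = 1 := Units.ext h
    rw [this, orderOf_one] at hu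
    omega
  have hfac : ((u : ZMod p) - 1) * ((u:ZMod p) * u + u + 1) = 0 := by
    linear_combination hu3
  rcases mul_eq_zero.mp hfac with h | h
  · exact absurd (by linear_combination h) hne
  · exact h

/-- 2 dividing `a² + ab + b²` forces both even. -/
lemma aux_two_dvd {a b : ℤ} (h : (2 : ℤ) ∣ a ^ 2 + a * b + b ^ 2) : 2 ∣ a ∧ 2 ∣ b := by
  have h0 : ((a : ZMod 2)) ^ 2 + (a : ZMod 2) * (b : ZMod 2) + (b : ZMod 2) ^ 2 = 0 := by
    have := (ZMod.intCast_zmod_eq_zero_iff_dvd _ 2).mpr (by exact_mod_cast h)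
    push_cast at this
    linear_combination this
  have key : ∀ x y : ZMod 2, x ^ 2 + x * y + y ^ 2 = 0 → x = 0 ∧ y = 0 := by decide
  obtain ⟨ha, hb⟩ := key _ _ h0
  exact ⟨by exact_mod_cast (ZMod.intCast_zmod_eq_zero_iff_dvd _ 2).mp ha,
    by exact_mod_cast (ZMod.intCast_zmod_eq_zero_iff_dvd _ 2).mp hb⟩


/-- Every prime `p ≡ 1 mod 3` is of the form `a² + ab + b²`. -/
lemma aux_prime_rep {p : ℕ} (hp : p.Prime) (hp1 : p % 3 = 1) :
    ∃ a b : ℤ, a ^ 2 + a * b + b ^ 2 = p := by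
  haveI : Fact p.Prime := ⟨hp⟩
  obtain ⟨w, hw⟩ := aux_cube_root hp hp1
  obtain ⟨s, hs⟩ : ∃ s, Nat.sqrt p = s := ⟨_, rfl⟩
  have hs2 : s ^ 2 < p := by
    rcases lt_or_eq_of_le (hs ▸ Nat.sqrt_le' p) with h | h
    · simpa [pow_two] using h
    · exfalso
      have hd : s ∣ p := ⟨s, by rw [← h]; ring⟩
      rcases hp.eq_one_or_self_of_dvd s hd with h1 | h1
      · have := hp.two_le; rw [h1] at h; simp at h; omega
      · have := hp.two_le; rw [h1] at h; nlinarith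
  have hcard : Fintype.card (ZMod p) < Fintype.card (Fin (s+1) × Fin (s+1)) := by
    simp only [ZMod.card, Fintype.card_prod, Fintype.card_fin]
    have h := hs ▸ Nat.lt_succ_sqrt' p
    rw [Nat.succ_eq_add_one, pow_two] at h
    exact h
  obtain ⟨q₁, q₂, hne, heq⟩ := Fintype.exists_ne_map_eq_of_card_lt
    (fun q : Fin (s+1) × Fin (s+1) => ((q.1.val : ZMod p)) - w * (q.2.val : ZMod p)) hcard
  obtain ⟨x, hxdef⟩ : ∃ x : ℤ, (q₁.1.val : ℤ) - q₂.1.val = x := ⟨_, rfl⟩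
  obtain ⟨y, hydef⟩ : ∃ y : ℤ, (q₁.2.val : ℤ) - q₂.2.val = y := ⟨_, rfl⟩
  have hxy : ((x : ZMod p)) = w * (y : ZMod p) := by
    rw [← hxdef, ← hydef]
    push_cast
    linear_combination heq
  have hb1 : q₁.1.val ≤ s := Nat.lt_succ_iff.mp q₁.1.isLt
  have hb2 : q₂.1.val ≤ s := Nat.lt_succ_iff.mp q₂.1.isLt
  have hb3 : q₁.2.val ≤ s := Nat.lt_succ_iff.mp q₁.2.isLt
  have hb4 : q₂.2.val ≤ s := Nat.lt_succ_iff.mp q₂.2.isLt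
  have hx1 : -(s : ℤ) ≤ x := by omega
  have hx2 : x ≤ s := by omega
  have hy1 : -(s : ℤ) ≤ y := by omega
  have hy2 : y ≤ s := by omega
  have hNpos : 0 < x ^ 2 + x * y + y ^ 2 := by
    have hne' : x ≠ 0 ∨ y ≠ 0 := by
      by_contra hc
      push_neg at hc
      apply hne
      have h1 : q₁.1 = q₂.1 := Fin.ext (by omega)
      have h2 : q₁.2 = q₂.2 := Fin.ext (by omega)
      exact Prod.ext h1 h2
    rcases eq_or_ne y 0 with hy | hy
    · have hx : x ≠ 0 := by tauto
      have h0 : 0 < x ^ 2 := by positivity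
      rw [hy]; ring_nf; nlinarith
    · have h0 : 0 < y ^ 2 := by positivity
      nlinarith [sq_nonneg (2*x + y)]
  have hNlt : x ^ 2 + x * y + y ^ 2 < 3 * p := by
    have hss : (s : ℤ) ^ 2 < p := by exact_mod_cast hs2
    nlinarith [mul_nonneg (by linarith : (0:ℤ) ≤ (s:ℤ) - x) (by linarith : (0:ℤ) ≤ (s:ℤ) + x),
      mul_nonneg (by linarith : (0:ℤ) ≤ (s:ℤ) - y) (by linarith : (0:ℤ) ≤ (s:ℤ) + y),
      mul_nonneg (by linarith : (0:ℤ) ≤ (s:ℤ) - x) (by linarith : (0:ℤ) ≤ (s:ℤ) + y),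
      mul_nonneg (by linarith : (0:ℤ) ≤ (s:ℤ) + x) (by linarith : (0:ℤ) ≤ (s:ℤ) - y)]
  have hdvd : (p : ℤ) ∣ x ^ 2 + x * y + y ^ 2 := by
    have hcast : ((x ^ 2 + x * y + y ^ 2 : ℤ) : ZMod p) = 0 := by
      push_cast
      rw [hxy]
      linear_combination ((y : ZMod p))^2 * hw
    exact (ZMod.intCast_zmod_eq_zero_iff_dvd _ p).mp hcast
  obtain ⟨k, hk⟩ := hdvd
  have hppos : (0 : ℤ) < p := by exact_mod_cast hp.pos
  have hk1 : 1 ≤ k := by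
    by_contra h
    push_neg at h
    have h0 : (p : ℤ) * k ≤ 0 := mul_nonpos_of_nonneg_of_nonpos hppos.le (by omega)
    linarith
  have hk2 : k ≤ 2 := by
    by_contra h
    push_neg at h
    have h0 : (p : ℤ) * 3 ≤ p * k := by
      apply mul_le_mul_of_nonneg_left (by omega) hppos.le
    linarith
  rcases (by omega : k = 1 ∨ k = 2) with rfl | rfl
  · exact ⟨x, y, by linarith⟩
  · exfalso
    have h2N : (2 : ℤ) ∣ x ^ 2 + x * y + y ^ 2 := ⟨p, by linarith⟩
    obtain ⟨ha, hb⟩ := aux_two_dvd h2N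
    obtain ⟨x', rfl⟩ := ha
    obtain ⟨y', rfl⟩ := hb
    have heq2 : (p : ℤ) = 2 * (x' ^ 2 + x' * y' + y' ^ 2) := by linarith [hk]
    have h2p : (2 : ℕ) ∣ p := by
      have : (2 : ℤ) ∣ (p : ℤ) := ⟨_, heq2⟩
      exact_mod_cast this
    rcases (Nat.prime_dvd_prime_iff_eq Nat.prime_two hp).mp h2p with rfl
    omega

def IsLoe (m : ℕ) : Prop := ∃ a b : ℤ, a ^ 2 + a * b + b ^ 2 = m


lemma aux_mul {m n : ℕ} (hm : IsLoe m) (hn : IsLoe n) : IsLoe (m * n) := by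
  obtain ⟨a, b, hab⟩ := hm
  obtain ⟨c, d, hcd⟩ := hn
  refine ⟨a * c - b * d, a * d + b * c + b * d, ?_⟩
  push_cast
  linear_combination (c ^ 2 + c * d + d ^ 2) * hab + (m : ℤ) * hcd

lemma aux_prime_rep' {p : ℕ} (hp : p.Prime) (hp2 : p % 3 ≠ 2) : IsLoe p := by
  rcases (by omega : p % 3 = 0 ∨ p % 3 = 1 ∨ p % 3 = 2) with h | h | h
  · have h3 : (3 : ℕ) ∣ p := Nat.dvd_of_mod_eq_zero h
    rcases (Nat.prime_dvd_prime_iff_eq Nat.prime_three hp).mp h3 with rfl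
    exact ⟨1, 1, by norm_num⟩
  · exact aux_prime_rep hp h
  · exact absurd h hp2

lemma aux_forward : ∀ m : ℕ, IsLoe m → ∀ p : ℕ, p.Prime → p % 3 = 2 →
    Even (m.factorization p) := by
  intro m
  induction m using Nat.strong_induction_on with
  | _ m ih =>
    intro hm p hp hp2
    rcases eq_or_ne m 0 with rfl | hm0
    · simp
    by_cases hpm : p ∣ m
    · obtain ⟨a, b, hab⟩ := hm
      have hdvd : (p : ℤ) ∣ a ^ 2 + a * b + b ^ 2 := by
        rw [hab]; exact_mod_cast Int.natCast_dvd_natCast.mpr hpm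
      obtain ⟨ha, hb⟩ := aux_descent hp hp2 hdvd
      obtain ⟨a', rfl⟩ := ha
      obtain ⟨b', rfl⟩ := hb
      have hV : ((p : ℤ)) ^ 2 * (a' ^ 2 + a' * b' + b' ^ 2) = (m : ℤ) := by
        linear_combination hab
      have hVnn : 0 ≤ a' ^ 2 + a' * b' + b' ^ 2 := by nlinarith [sq_nonneg (2*a' + b'), sq_nonneg b']
      obtain ⟨M, hM⟩ : ∃ M : ℕ, (M : ℤ) = a' ^ 2 + a' * b' + b' ^ 2 :=
        ⟨(a' ^ 2 + a' * b' + b' ^ 2).toNat, Int.toNat_of_nonneg hVnn⟩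
      have hmeq : m = p ^ 2 * M := by
        have : ((p ^ 2 * M : ℕ) : ℤ) = (m : ℤ) := by push_cast; rw [hM]; linarith [hV]
        exact_mod_cast this.symm
      have hM0 : M ≠ 0 := by
        rintro rfl
        simp at hmeq
        exact hm0 hmeq
      have hMlt : M < m := by
        have h4 : 2 * 2 ≤ p * p := Nat.mul_le_mul hp.two_le hp.two_le
        have hle : (2 * 2) * M ≤ (p * p) * M := Nat.mul_le_mul_right M h4
        have hpm2 : p ^ 2 * M = (p * p) * M := by ring
        have := Nat.pos_of_ne_zero hM0
        omega
      have hMloe : IsLoe M := ⟨a', b', hM.symm⟩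
      have hfac : m.factorization p = 2 + M.factorization p := by
        rw [hmeq, Nat.factorization_mul (pow_ne_zero 2 hp.ne_zero) hM0]
        simp [hp.factorization_pow]
      rw [hfac]
      obtain ⟨r, hr⟩ := ih M hMlt hMloe p hp hp2
      exact ⟨r + 1, by omega⟩
    · rw [Nat.factorization_eq_zero_of_not_dvd hpm]
      exact Even.zero

lemma aux_backward : ∀ m : ℕ, m ≠ 0 →
    (∀ p : ℕ, p.Prime → p % 3 = 2 → Even (m.factorization p)) → IsLoe m := by
  intro m
  induction m using Nat.strong_induction_on with
  | _ m ih =>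
    intro hm0 h
    rcases eq_or_ne m 1 with rfl | hm1
    · exact ⟨1, 0, by norm_num⟩
    obtain ⟨p, hpdef⟩ : ∃ p, m.minFac = p := ⟨_, rfl⟩
    have hp : p.Prime := hpdef ▸ Nat.minFac_prime hm1
    have hpm : p ∣ m := hpdef ▸ Nat.minFac_dvd m
    by_cases hp2 : p % 3 = 2
    · have he : Even (m.factorization p) := h p hp hp2
      have he1 : 1 ≤ m.factorization p := (Nat.Prime.factorization_pos_of_dvd hp hm0 hpm)
      obtain ⟨r, hr⟩ := he
      have hpp : p ^ 2 ∣ m := (Nat.Prime.pow_dvd_iff_le_factorization hp hm0).mpr (by omega)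
      obtain ⟨M, hM⟩ := hpp
      have hM0 : M ≠ 0 := by rintro rfl; simp at hM; exact hm0 hM
      have hMlt : M < m := by
        have h4 : 2 * 2 ≤ p * p := Nat.mul_le_mul hp.two_le hp.two_le
        have hle : (2 * 2) * M ≤ (p * p) * M := Nat.mul_le_mul_right M h4
        have hpm2 : p ^ 2 * M = (p * p) * M := by ring
        have := Nat.pos_of_ne_zero hM0
        omega
      have hcond : ∀ q : ℕ, q.Prime → q % 3 = 2 → Even (M.factorization q) := by
        intro q hq hq2
        have hfac : m.factorization q = (p ^ 2).factorization q + M.factorization q := by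
          rw [hM, Nat.factorization_mul (pow_ne_zero 2 hp.ne_zero) hM0]; simp
        rcases eq_or_ne q p with rfl | hqp
        · have hth := h q hq hq2
          rw [hfac] at hth
          rw [hq.factorization_pow, Finsupp.single_eq_same] at hth
          obtain ⟨r', hr'⟩ := hth
          exact ⟨r' - 1, by omega⟩
        · have := h q hq hq2
          rw [hfac] at this
          rwa [hp.factorization_pow, Finsupp.single_eq_of_ne' (by exact fun hc => hqp hc.symm),
            zero_add] at this
      have hMloe := ih M hMlt hM0 hcond
      have : IsLoe (p ^ 2) := ⟨p, 0, by push_cast; ring⟩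
      rw [hM]
      exact aux_mul this hMloe
    · have hploe : IsLoe p := aux_prime_rep' hp hp2
      obtain ⟨M, hM⟩ := hpm
      have hM0 : M ≠ 0 := by rintro rfl; simp at hM; exact hm0 hM
      have hMlt : M < m := by
        have hle : 2 * M ≤ p * M := Nat.mul_le_mul_right M hp.two_le
        have := Nat.pos_of_ne_zero hM0
        omega
      have hcond : ∀ q : ℕ, q.Prime → q % 3 = 2 → Even (M.factorization q) := by
        intro q hq hq2
        have hqp : q ≠ p := by intro hc; rw [hc] at hq2; exact hp2 hq2
        have hfac : m.factorization q = p.factorization q + M.factorization q := by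
          rw [hM, Nat.factorization_mul hp.ne_zero hM0]; simp
        have := h q hq hq2
        rw [hfac, hp.factorization, Finsupp.single_eq_of_ne' (by exact fun hc => hqp hc.symm),
          zero_add] at this
        exact this
      have hMloe := ih M hMlt hM0 hcond
      rw [hM]
      exact aux_mul hploe hMloe


theorem stmt9 (n : ℕ) :
    (∃ x y : ℤ, x ^ 2 + 3 * y ^ 2 = 12 * n + 4) ↔
      ∀ p : ℕ, p.Prime → p % 3 = 2 → Even ((3 * n + 1).factorization p) := by
  constructor
  · rintro ⟨x, y, h⟩
    have h2 : (x : ZMod 2) ^ 2 + 3 * (y : ZMod 2) ^ 2 = 0 := by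
      have hc := congrArg (fun t : ℤ => (t : ZMod 2)) h
      push_cast at hc
      rw [show (12 : ZMod 2) = 0 by decide, show (4 : ZMod 2) = 0 by decide] at hc
      simpa using hc
    have key2 : ∀ X Y : ZMod 2, X ^ 2 + 3 * Y ^ 2 = 0 → X - Y = 0 := by decide
    have hdvd : (2 : ℤ) ∣ x - y := by
      apply (ZMod.intCast_zmod_eq_zero_iff_dvd (x - y) 2).mp
      push_cast
      exact key2 _ _ h2
    obtain ⟨a, ha⟩ := hdvd
    have hz : x - y - 2 * a = 0 := by omega
    have hloe : IsLoe (3 * n + 1) := by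
      refine ⟨a, y, ?_⟩
      push_cast
      have h4 : 4 * (a ^ 2 + a * y + y ^ 2) = 4 * (3 * (n : ℤ) + 1) := by
        linear_combination h - (x + y + 2 * a) * hz
      linarith
    exact aux_forward (3 * n + 1) hloe
  · intro h
    obtain ⟨a, b, hab⟩ := aux_backward (3 * n + 1) (by omega) h
    refine ⟨2 * a + b, b, ?_⟩
    push_cast at hab ⊢
    linear_combination 4 * hab
end

section
/- Let n be a nonnegative integer and let K be the third cyclotomic field ℚ(ζ₃) (whose ring of integers is the ring of Eisenstein integers ℤ[ζ₃]). Then the number of ideals of the ring of integers of K with absolute norm 3n+1 equals the number of 3-core partitions of n, i.e. equals |C_n|. -/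
open NumberField

/-- The third cyclotomic field `ℚ(ζ₃)` is a number field; its ring of integers is
the ring of Eisenstein integers `ℤ[ζ₃]`. -/
noncomputable instance : NumberField (CyclotomicField 3 ℚ) :=
  inferInstance

namespace Aux11

open Polynomial

noncomputable abbrev KK := CyclotomicField 3 ℚ

instance : IsCyclotomicExtension {3} ℚ KK := CyclotomicField.isCyclotomicExtension 3 ℚ

noncomputable def zz : KK := IsCyclotomicExtension.zeta 3 ℚ KK

lemma hz : IsPrimitiveRoot zz 3 := IsCyclotomicExtension.zeta_spec 3 ℚ KK

noncomputable def ee : 𝓞 KK := hz.toInteger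

lemma ee_coe : (algebraMap (𝓞 KK) KK) ee = zz := rfl

lemma ee_cube : ee ^ 3 = 1 := hz.toInteger_cube_eq_one

lemma zz_sq : zz ^ 2 + zz + 1 = 0 := by
  simpa using hz.isRoot_cyclotomic (by decide)

lemma ee_sq : ee ^ 2 + ee + 1 = 0 := by
  have := zz_sq
  ext
  push_cast [← ee_coe] at this ⊢
  convert this using 2 <;> simp [ee_coe]

end Aux11

namespace Aux11

open IsPrimitiveRoot in
lemma exists_coords (w : 𝓞 KK) : ∃ x y : ℤ, w = (x : 𝓞 KK) + y * ee := by
  obtain ⟨f, hf, hw⟩ := hz.integralPowerBasis.exists_eq_aeval w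
  have hdim : hz.integralPowerBasis.dim = 2 := by
    rw [hz.integralPowerBasis_dim]; rfl
  rw [hdim] at hf
  have hdeg : f.degree ≤ 1 :=
    Polynomial.degree_le_of_natDegree_le (Nat.lt_succ_iff.mp hf)
  refine ⟨f.coeff 0, f.coeff 1, ?_⟩
  rw [hw]
  conv_lhs => rw [Polynomial.eq_X_add_C_of_degree_le_one hdeg]
  rw [hz.integralPowerBasis_gen]
  simp only [map_add, map_mul, Polynomial.aeval_X, Polynomial.aeval_C, map_intCast, algebraMap_int_eq, eq_intCast]
  show _ = _ + _ * hz.toInteger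
  ring

lemma mul_conj (x y : ℤ) :
    ((x : 𝓞 KK) + y * ee) * ((x : 𝓞 KK) + y * ee ^ 2) = ((x^2 - x*y + y^2 : ℤ) : 𝓞 KK) := by
  push_cast
  linear_combination (x * y : 𝓞 KK) * ee_sq + (y : 𝓞 KK)^2 * ee_cube

lemma coords_unique {x y : ℤ} (h : (x : 𝓞 KK) + y * ee = 0) : x = 0 ∧ y = 0 := by
  have h2 : ((x^2 - x*y + y^2 : ℤ) : 𝓞 KK) = 0 := by
    rw [← mul_conj, h, zero_mul]
  have h3 : x^2 - x*y + y^2 = 0 := by exact_mod_cast h2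
  constructor <;> nlinarith [sq_nonneg (x+y), sq_nonneg (x-y), sq_nonneg x, sq_nonneg y]

end Aux11

namespace Aux11

noncomputable def MB : Module.Basis (Fin 2) ℤ (𝓞 KK) :=
  hz.integralPowerBasis.basis.reindex (finCongr (by rw [hz.integralPowerBasis_dim]; rfl))

lemma MB_apply (i : Fin 2) : MB i = ee ^ (i : ℕ) := by
  simp [MB, Module.Basis.reindex_apply, PowerBasis.basis_eq_pow, hz.integralPowerBasis_gen, ee]

lemma MB_repr (a b : ℤ) (i : Fin 2) :
    MB.repr ((a : 𝓞 KK) + b * ee) i = ![a, b] i := by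
  have hab : (a : 𝓞 KK) + b * ee = a • MB 0 + b • MB 1 := by
    rw [MB_apply, MB_apply]
    simp only [Fin.val_zero, Fin.val_one, pow_zero, pow_one, zsmul_eq_mul]
    push_cast
    ring
  rw [hab, map_add, map_smul, map_smul, MB.repr_self, MB.repr_self]
  fin_cases i <;> simp

lemma norm_coords (x y : ℤ) :
    Algebra.norm ℤ ((x : 𝓞 KK) + y * ee) = x ^ 2 - x * y + y ^ 2 := by
  rw [Algebra.norm_eq_matrix_det MB, Matrix.det_fin_two]
  have h0 : ((x : 𝓞 KK) + y * ee) * MB 0 = ((x : ℤ) : 𝓞 KK) + y * ee := by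
    rw [MB_apply]; simp
  have h1 : ((x : 𝓞 KK) + y * ee) * MB 1 = ((-y : ℤ) : 𝓞 KK) + ((x - y : ℤ)) * ee := by
    rw [MB_apply]
    simp only [Fin.val_one, pow_one]
    push_cast
    linear_combination (y : 𝓞 KK) * ee_sq
  rw [Algebra.leftMulMatrix_eq_repr_mul, Algebra.leftMulMatrix_eq_repr_mul,
    Algebra.leftMulMatrix_eq_repr_mul, Algebra.leftMulMatrix_eq_repr_mul, h0, h1,
    MB_repr, MB_repr, MB_repr, MB_repr]
  simp
  ring

end Aux11

namespace Aux11

noncomputable def zc (x y : ℤ) : 𝓞 KK := (x : 𝓞 KK) + y * ee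

lemma unit_cases (u : (𝓞 KK)ˣ) : (u : 𝓞 KK) = 1 ∨ (u : 𝓞 KK) = -1 ∨ (u : 𝓞 KK) = ee ∨
    (u : 𝓞 KK) = -ee ∨ (u : 𝓞 KK) = ee ^ 2 ∨ (u : 𝓞 KK) = -ee ^ 2 := by
  have h := IsCyclotomicExtension.Rat.Three.Units.mem hz u
  simp only [List.mem_cons, List.mem_singleton, List.not_mem_nil, or_false] at h
  rcases h with h | h | h | h | h | h <;> rw [h] <;> simp [IsCyclotomicExtension.Rat.Three.coe_eta, ee]

lemma coords_inj {x y x' y' : ℤ} (h : zc x y = zc x' y') : x = x' ∧ y = y' := by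
  have h0 : ((x - x' : ℤ) : 𝓞 KK) + ((y - y' : ℤ) : 𝓞 KK) * ee = 0 := by
    unfold zc at h
    push_cast
    linear_combination h
  have := coords_unique h0
  omega

lemma mul_ee (x y : ℤ) : zc x y * ee = zc (-y) (x - y) := by
  unfold zc; push_cast
  linear_combination (y : 𝓞 KK) * ee_sq

lemma mul_ee2 (x y : ℤ) : zc x y * ee ^ 2 = zc (y - x) (-x) := by
  unfold zc; push_cast
  linear_combination (x : 𝓞 KK) * ee_sq + (y : 𝓞 KK) * ee_cube

lemma mul_neg' (x y : ℤ) : zc x y * (-1) = zc (-x) (-y) := by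
  unfold zc; push_cast; ring

lemma mul_negee (x y : ℤ) : zc x y * (-ee) = zc y (y - x) := by
  unfold zc; push_cast
  linear_combination (-y : 𝓞 KK) * ee_sq

lemma mul_negee2 (x y : ℤ) : zc x y * (-ee ^ 2) = zc (x - y) x := by
  unfold zc; push_cast
  linear_combination (-x : 𝓞 KK) * ee_sq + (-y : 𝓞 KK) * ee_cube

lemma assoc_coords {x y x' y' : ℤ} (h : Associated (zc x y) (zc x' y'))
    (hx : x % 3 = 1) (hy : y % 3 = 1) (hx' : x' % 3 = 1) (hy' : y' % 3 = 1) :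
    x = x' ∧ y = y' := by
  obtain ⟨u, hu⟩ := h
  rcases unit_cases u with h6 | h6 | h6 | h6 | h6 | h6 <;> rw [h6] at hu
  · rw [mul_one] at hu; exact coords_inj hu
  · rw [mul_neg', ] at hu; have := coords_inj hu; omega
  · rw [mul_ee] at hu; have := coords_inj hu; omega
  · rw [mul_negee] at hu; have := coords_inj hu; omega
  · rw [mul_ee2] at hu; have := coords_inj hu; omega
  · rw [mul_negee2] at hu; have := coords_inj hu; omega

end Aux11

namespace Aux11

lemma int_mod3 {x c : ℤ} (hc : 0 ≤ c) (hc3 : c < 3) (h : (x : ZMod 3) = (c : ZMod 3)) :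
    x % 3 = c := by
  rw [ZMod.intCast_eq_intCast_iff] at h
  have := h.dvd
  omega

lemma mod3_cases {x y n : ℤ} (h : x ^ 2 - x * y + y ^ 2 = 3 * n + 1) :
    (x % 3 = 1 ∧ y % 3 = 1) ∨ (x % 3 = 2 ∧ y % 3 = 2) ∨ (x % 3 = 0 ∧ y % 3 = 2) ∨
    (x % 3 = 0 ∧ y % 3 = 1) ∨ (x % 3 = 2 ∧ y % 3 = 0) ∨ (x % 3 = 1 ∧ y % 3 = 0) := by
  have hc : ((x : ZMod 3)) ^ 2 - x * y + y ^ 2 = 1 := by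
    have := congrArg (Int.cast : ℤ → ZMod 3) h
    push_cast at this
    rw [this]
    simp [show ((3 : ZMod 3)) = 0 by decide]
  have key : ∀ a b : ZMod 3, a ^ 2 - a * b + b ^ 2 = 1 →
      (a = ((1 : ℤ) : ZMod 3) ∧ b = ((1 : ℤ) : ZMod 3)) ∨
      (a = ((2 : ℤ) : ZMod 3) ∧ b = ((2 : ℤ) : ZMod 3)) ∨
      (a = ((0 : ℤ) : ZMod 3) ∧ b = ((2 : ℤ) : ZMod 3)) ∨
      (a = ((0 : ℤ) : ZMod 3) ∧ b = ((1 : ℤ) : ZMod 3)) ∨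
      (a = ((2 : ℤ) : ZMod 3) ∧ b = ((0 : ℤ) : ZMod 3)) ∨
      (a = ((1 : ℤ) : ZMod 3) ∧ b = ((0 : ℤ) : ZMod 3)) := by decide
  have cv : ∀ {a : ℤ} {c : ℤ}, 0 ≤ c → c < 3 → (a : ZMod 3) = (c : ZMod 3) → a % 3 = c :=
    fun hc hc3 h => int_mod3 hc hc3 h
  rcases key _ _ hc with ⟨h1, h2⟩ | ⟨h1, h2⟩ | ⟨h1, h2⟩ | ⟨h1, h2⟩ | ⟨h1, h2⟩ | ⟨h1, h2⟩
  · exact Or.inl ⟨cv (by norm_num) (by norm_num) h1, cv (by norm_num) (by norm_num) h2⟩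
  · exact Or.inr <| Or.inl ⟨cv (by norm_num) (by norm_num) h1, cv (by norm_num) (by norm_num) h2⟩
  · exact Or.inr <| Or.inr <| Or.inl ⟨cv (by norm_num) (by norm_num) h1, cv (by norm_num) (by norm_num) h2⟩
  · exact Or.inr <| Or.inr <| Or.inr <| Or.inl ⟨cv (by norm_num) (by norm_num) h1, cv (by norm_num) (by norm_num) h2⟩
  · exact Or.inr <| Or.inr <| Or.inr <| Or.inr <| Or.inl ⟨cv (by norm_num) (by norm_num) h1, cv (by norm_num) (by norm_num) h2⟩
  · exact Or.inr <| Or.inr <| Or.inr <| Or.inr <| Or.inr ⟨cv (by norm_num) (by norm_num) h1, cv (by norm_num) (by norm_num) h2⟩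

lemma normalize {x y n : ℤ} (h : x ^ 2 - x * y + y ^ 2 = 3 * n + 1) :
    ∃ x' y' : ℤ, x' % 3 = 1 ∧ y' % 3 = 1 ∧ Associated (zc x y) (zc x' y') ∧
      x' ^ 2 - x' * y' + y' ^ 2 = 3 * n + 1 := by
  have u3 : ee * ee ^ 2 = 1 := by rw [← pow_succ']; exact ee_cube
  have u3' : ee ^ 2 * ee = 1 := by rw [← pow_succ]; exact ee_cube
  rcases mod3_cases h with ⟨h1, h2⟩ | ⟨h1, h2⟩ | ⟨h1, h2⟩ | ⟨h1, h2⟩ | ⟨h1, h2⟩ | ⟨h1, h2⟩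
  · exact ⟨x, y, h1, h2, Associated.refl _, h⟩
  · exact ⟨-x, -y, by omega, by omega, ⟨⟨-1, -1, by ring, by ring⟩, mul_neg' x y⟩,
      by linear_combination h⟩
  · exact ⟨-y, x - y, by omega, by omega, ⟨⟨ee, ee ^ 2, u3, u3'⟩, mul_ee x y⟩,
      by linear_combination h⟩
  · exact ⟨y, y - x, by omega, by omega, ⟨⟨-ee, -ee ^ 2, by linear_combination u3, by linear_combination u3'⟩, mul_negee x y⟩,
      by linear_combination h⟩
  · exact ⟨y - x, -x, by omega, by omega, ⟨⟨ee ^ 2, ee, u3', u3⟩, mul_ee2 x y⟩,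
      by linear_combination h⟩
  · exact ⟨x - y, x, by omega, by omega, ⟨⟨-ee ^ 2, -ee, by linear_combination u3', by linear_combination u3⟩, mul_negee2 x y⟩,
      by linear_combination h⟩

end Aux11

namespace Aux11

noncomputable def fI (p : ℤ × ℤ) : Ideal (𝓞 KK) :=
  Ideal.span {zc (3 * p.1 + 3 * p.2 + 1) (3 * p.2 + 1)}

lemma normf {p : ℤ × ℤ} {n : ℤ} (hp : p ∈ _root_.C n) :
    (3*p.1+3*p.2+1)^2 - (3*p.1+3*p.2+1)*(3*p.2+1) + (3*p.2+1)^2 = 3*n+1 := by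
  have hp' : 3 * p.1 ^ 2 + 3 * p.1 * p.2 + 3 * p.2 ^ 2 + p.1 + 2 * p.2 = n := hp
  linear_combination 3 * hp'

lemma habs (x y : ℤ) : Ideal.absNorm (Ideal.span {zc x y}) = (x^2 - x*y + y^2).natAbs := by
  rw [Ideal.absNorm_span_singleton]
  unfold zc; rw [norm_coords]

theorem main (n : ℕ) :
    {I : Ideal (𝓞 KK) | Ideal.absNorm I = 3 * n + 1}.ncard = (_root_.C (n : ℤ)).ncard := by
  classical
  have himg : fI '' _root_.C (n : ℤ) = {I : Ideal (𝓞 KK) | Ideal.absNorm I = 3 * n + 1} := by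
    apply Set.Subset.antisymm
    · rintro _ ⟨p, hp, rfl⟩
      simp only [Set.mem_setOf_eq]
      unfold fI
      rw [habs, normf hp]
      omega
    · rintro I hI
      simp only [Set.mem_setOf_eq] at hI
      haveI := IsCyclotomicExtension.Rat.three_pid (K := KK)
      obtain ⟨z, hzI⟩ := (IsPrincipalIdealRing.principal I).principal
      obtain ⟨x, y, hc⟩ := exists_coords z
      have hnn : 0 ≤ x^2 - x*y + y^2 := by nlinarith [sq_nonneg (2*x - y), sq_nonneg y]
      have hnorm : x^2 - x*y + y^2 = 3*(n:ℤ) + 1 := by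
        have : Ideal.absNorm I = (x^2 - x*y + y^2).natAbs := by
          rw [hzI]
          rw [show Submodule.span (𝓞 KK) {z} = Ideal.span {zc x y} by rw [hc]; rfl]
          exact habs x y
        rw [hI] at this
        omega
      obtain ⟨x', y', hx', hy', hassoc, hnorm'⟩ := normalize hnorm
      obtain ⟨a, haa⟩ : ∃ a, x' = 3*a + 3*((y'-1)/3) + 1 := ⟨(x'-y')/3, by omega⟩
      obtain ⟨b, hbb⟩ : ∃ b, y' = 3*b + 1 := ⟨(y'-1)/3, by omega⟩
      rw [show 3*((y'-1)/3) = 3*b by omega] at haa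
      refine ⟨(a, b), ?_, ?_⟩
      · show 3 * a ^ 2 + 3 * a * b + 3 * b ^ 2 + a + 2 * b = (n : ℤ)
        have h3 : 3*(3 * a ^ 2 + 3 * a * b + 3 * b ^ 2 + a + 2 * b) = 3*(n:ℤ) := by
          rw [haa, hbb] at hnorm'
          linear_combination hnorm'
        linarith
      · unfold fI
        rw [hzI]
        have : Associated (zc (3*a+3*b+1) (3*b+1)) z := by
          rw [hc, ← haa, ← hbb]
          exact hassoc.symm
        exact Ideal.span_singleton_eq_span_singleton.mpr this
  have hinj : Set.InjOn fI (_root_.C (n : ℤ)) := by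
    intro p hp q hq hpq
    unfold fI at hpq
    have hassoc := Ideal.span_singleton_eq_span_singleton.mp hpq
    have := assoc_coords hassoc (by omega) (by omega) (by omega) (by omega)
    have h1 : p.1 = q.1 := by omega
    have h2 : p.2 = q.2 := by omega
    exact Prod.ext h1 h2
  rw [← himg, Set.ncard_image_of_injOn hinj]

end Aux11


theorem stmt11 (n : ℕ) :
    {I : Ideal (𝓞 (CyclotomicField 3 ℚ)) | Ideal.absNorm I = 3 * n + 1}.ncard =
      (C (n : ℤ)).ncard := by
  exact Aux11.main n
end

section
/- Let n be a nonnegative integer and let k be a perfect square not divisible by 3 having no prime factor p ≡ 1 (mod 3). Then a₃(kn + (k−1)/3) = a₃(n), i.e. |C_{kn+(k−1)/3}| = |C_n|. -/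
lemma prime_inert (p : ℕ) (hp : p.Prime) (hp3 : p % 3 = 2) (a b : ℤ)
    (h : (p:ℤ) ∣ a^2 + a*b + b^2) : (p:ℤ) ∣ b := by
  haveI := Fact.mk hp
  have hab : (a : ZMod p)^2 + (a:ZMod p)*(b:ZMod p) + (b:ZMod p)^2 = 0 := by
    have := (ZMod.intCast_zmod_eq_zero_iff_dvd _ p).mpr h
    push_cast at this
    linear_combination this
  rw [← ZMod.intCast_zmod_eq_zero_iff_dvd]
  by_contra hb
  set x : ZMod p := (a : ZMod p) * (b : ZMod p)⁻¹ with hxdef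
  have hbinv : (b : ZMod p) * (b : ZMod p)⁻¹ = 1 := mul_inv_cancel₀ hb
  have hx : x^2 + x + 1 = 0 := by
    have : (x^2 + x + 1) * ((b:ZMod p) * (b:ZMod p)) =
        ((a : ZMod p)^2 + (a:ZMod p)*(b:ZMod p) + (b:ZMod p)^2) := by
      rw [hxdef]
      field_simp
    have hb2 : ((b:ZMod p) * (b:ZMod p)) ≠ 0 := mul_ne_zero hb hb
    have := this.trans hab
    exact (mul_eq_zero.mp this).resolve_right hb2
  have hx3 : x^3 = 1 := by linear_combination (x - 1) * hx
  have hx1 : x ≠ 1 := by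
    intro hx1
    rw [hx1] at hx
    have h3 : ((3:ℕ) : ZMod p) = 0 := by push_cast; linear_combination hx
    have := (ZMod.natCast_eq_zero_iff 3 p).mp h3
    have := (Nat.prime_dvd_prime_iff_eq hp (by norm_num)).mp this
    omega
  have hord : orderOf x = 3 := orderOf_eq_prime hx3 hx1
  have hx0 : x ≠ 0 := by
    intro h0; rw [h0] at hx3; simp at hx3
  have hfer : x ^ (p - 1) = 1 := ZMod.pow_card_sub_one_eq_one hx0
  have hdvd : 3 ∣ p - 1 := hord ▸ orderOf_dvd_of_pow_eq_one hfer
  have := hp.two_le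
  omega



lemma descent (m : ℕ) : ∀ (_ : ∀ p : ℕ, p.Prime → p ∣ m → p % 3 = 2) (_ : m ≠ 0)
    (a b N : ℤ), a^2 + a*b + b^2 = (m:ℤ)^2 * N → (m:ℤ) ∣ a ∧ (m:ℤ) ∣ b := by
  induction m using Nat.strong_induction_on with
  | _ m ih =>
    intro hm hm0 a b N h
    rcases eq_or_ne m 1 with rfl | hm1
    · simp
    · obtain ⟨p, hp, hpm⟩ := Nat.exists_prime_and_dvd hm1
      have hp3 : p % 3 = 2 := hm p hp hpm
      have hpQ : (p:ℤ) ∣ a^2 + a*b + b^2 := by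
        rw [h]
        exact Dvd.dvd.mul_right (by exact_mod_cast dvd_pow hpm (by norm_num)) N
      have hpb : (p:ℤ) ∣ b := prime_inert p hp hp3 a b hpQ
      have hpa : (p:ℤ) ∣ a := prime_inert p hp hp3 b a (by
        have : b^2 + b*a + a^2 = a^2 + a*b + b^2 := by ring
        rw [this]; exact hpQ)
      obtain ⟨m', rfl⟩ := hpm
      obtain ⟨a', rfl⟩ := hpa
      obtain ⟨b', rfl⟩ := hpb
      have hp0 : (p:ℤ) ≠ 0 := by exact_mod_cast hp.pos.ne'
      have h' : a'^2 + a'*b' + b'^2 = (m':ℤ)^2 * N := by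
        apply mul_left_cancel₀ (pow_ne_zero 2 hp0)
        push_cast at h
        linear_combination h
      have hm'0 : m' ≠ 0 := by rintro rfl; simp at hm0
      have hm'lt : m' < p * m' := by
        have h2 := hp.two_le
        have hpos := Nat.pos_of_ne_zero hm'0
        nlinarith
      have hm' : ∀ q : ℕ, q.Prime → q ∣ m' → q % 3 = 2 := fun q hq hqm' =>
        hm q hq (hqm'.mul_left p)
      obtain ⟨ha', hb'⟩ := ih m' hm'lt hm' hm'0 a' b' N h'
      constructor
      · push_cast
        exact mul_dvd_mul_left (p:ℤ) ha'
      · push_cast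
        exact mul_dvd_mul_left (p:ℤ) hb'




theorem stmt13 (n k : ℕ) (hsq : ∃ m : ℕ, k = m ^ 2) (hk3 : ¬ 3 ∣ k)
    (hk1 : ∀ p : ℕ, p.Prime → p ∣ k → p % 3 ≠ 1) :
    (C ((k * n + (k - 1) / 3 : ℕ) : ℤ)).ncard = (C (n : ℤ)).ncard := by
  obtain ⟨m, rfl⟩ := hsq
  have hm0 : m ≠ 0 := by rintro rfl; simp at hk3
  have hm3 : m % 3 ≠ 0 := by
    intro h
    exact hk3 (dvd_pow (Nat.dvd_of_mod_eq_zero h) (by norm_num))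
  have hm2 : ∀ p : ℕ, p.Prime → p ∣ m → p % 3 = 2 := by
    intro p hp hpm
    have hpk : p ∣ m ^ 2 := dvd_pow hpm (by norm_num)
    have h1 := hk1 p hp hpk
    have h3 : p ≠ 3 := by rintro rfl; exact hk3 hpk
    have := hp.two_le
    have : p % 3 ≠ 0 := by
      intro h0
      have : (3:ℕ) ∣ p := Nat.dvd_of_mod_eq_zero h0
      have := (Nat.prime_dvd_prime_iff_eq (by norm_num) hp).mp this
      exact h3 this.symm
    omega
  -- choose s = ±m with s = 3t+1
  obtain ⟨s, t, hsm, hst⟩ : ∃ s t : ℤ, s^2 = (m:ℤ)^2 ∧ s = 3*t+1 := by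
    have h12 : m % 3 = 1 ∨ m % 3 = 2 := by omega
    rcases h12 with h | h
    · obtain ⟨u, hu⟩ : ∃ u : ℕ, m = 3*u+1 := ⟨m/3, by omega⟩
      exact ⟨(m:ℤ), (u:ℤ), rfl, by rw [hu]; push_cast; ring⟩
    · obtain ⟨u, hu⟩ : ∃ u : ℕ, m = 3*u+2 := ⟨m/3, by omega⟩
      exact ⟨-(m:ℤ), -(u:ℤ)-1, by ring, by rw [hu]; push_cast; ring⟩
  have hmz : (m:ℤ) ≠ 0 := Int.natCast_ne_zero.mpr hm0
  have hs0 : s ≠ 0 := by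
    intro h
    rw [h] at hsm
    exact hmz (pow_eq_zero_iff (by norm_num : 2 ≠ 0) |>.mp (by simpa using hsm.symm))
  have hk1mod : m ^ 2 % 3 = 1 := by
    have h12 : m % 3 = 1 ∨ m % 3 = 2 := by omega
    have hpm := Nat.pow_mod m 2 3
    rcases h12 with h | h <;> rw [h] at hpm <;> simpa using hpm
  have hk0 : m ^ 2 ≠ 0 := pow_ne_zero 2 hm0
  set N' : ℕ := m ^ 2 * n + (m ^ 2 - 1) / 3 with hN'def
  have hNZ : 3 * (N' : ℤ) + 1 = s ^ 2 * (3 * (n:ℤ) + 1) := by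
    have h3n : 3 * ((m ^ 2 - 1) / 3) + 1 = m ^ 2 := by omega
    have h3 : 3 * (((m ^ 2 - 1) / 3 : ℕ) : ℤ) + 1 = (m:ℤ) ^ 2 := by
      exact_mod_cast congrArg (Nat.cast : ℕ → ℤ) h3n
    rw [hsm, hN'def, Nat.cast_add, Nat.cast_mul, Nat.cast_pow]
    linear_combination h3
  have hbij : Set.BijOn (fun p : ℤ × ℤ => (s * p.1, s * p.2 + t)) (C (n:ℤ)) (C (N' : ℤ)) := by
    refine ⟨?_, ?_, ?_⟩
    · rintro ⟨x, y⟩ hxy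
      simp only [C, Set.mem_setOf_eq] at hxy ⊢
      have h3 : 3 * (3 * (s*x) ^ 2 + 3 * (s*x) * (s*y+t) + 3 * (s*y+t) ^ 2 + (s*x) + 2 * (s*y+t)) + 1
          = 3 * (N':ℤ) + 1 := by
        rw [hNZ, hst]
        linear_combination (3*(3*t+1)^2) * hxy
      linarith
    · rintro ⟨x1, y1⟩ _ ⟨x2, y2⟩ _ hf
      simp only [Prod.mk.injEq] at hf
      obtain ⟨h1, h2⟩ := hf
      have hx : x1 = x2 := mul_left_cancel₀ hs0 h1
      have hy : y1 = y2 := mul_left_cancel₀ hs0 (by linarith)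
      simp [hx, hy]
    · rintro ⟨x', y'⟩ hxy
      simp only [C, Set.mem_setOf_eq] at hxy
      have hq : (3*x')^2 + (3*x')*(3*y'+1) + (3*y'+1)^2 = (m:ℤ)^2 * (3*(n:ℤ)+1) := by
        rw [← hsm, ← hNZ]
        linear_combination 3 * hxy
      obtain ⟨ha, hb⟩ := descent m hm2 hm0 (3*x') (3*y'+1) (3*(n:ℤ)+1) hq
      have hsdvd : ∀ z : ℤ, (m:ℤ) ∣ z → s ∣ z := by
        intro z hz
        rcases mul_eq_zero.mp (show (s - (m:ℤ)) * (s + (m:ℤ)) = 0 by linear_combination hsm) with h|h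
        · have hs : s = (m:ℤ) := by linarith
          rwa [hs]
        · have hs : s = -(m:ℤ) := by linarith
          rw [hs]
          exact (neg_dvd).mpr hz
      have hcop : IsCoprime s (3:ℤ) := ⟨1, -t, by linarith⟩
      have hsx : s ∣ x' := by
        have h1 : s ∣ 3 * x' := hsdvd _ ha
        exact hcop.dvd_of_dvd_mul_left h1
      obtain ⟨x, hx⟩ := hsx
      obtain ⟨c, hc⟩ := hsdvd _ hb
      obtain ⟨y, hcy⟩ : ∃ y : ℤ, c = 3*y+1 := ⟨y' - t*c, by linear_combination -hc - c * hst⟩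
      rw [hcy] at hc
      refine ⟨(x, y), ?_, ?_⟩
      · simp only [C, Set.mem_setOf_eq]
        have h1 : (3*x)^2 + (3*x)*(3*y+1) + (3*y+1)^2 = 3*(n:ℤ)+1 := by
          apply mul_left_cancel₀ (pow_ne_zero 2 hs0)
          rw [← hsm] at hq
          rw [hx] at hq
          linear_combination hq - (3*s*x + s*(3*y+1) + (3*y'+1)) * hc
        linarith
      · have hy : s * y + t = y' := by
          have h' : 3*y'+1 = 3*s*y + s := by linear_combination hc
          linarith
        simp only [Prod.mk.injEq]
        exact ⟨hx.symm, hy⟩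
  rw [← hbij.image_eq]
  exact Set.ncard_image_of_injOn hbij.injOn
end

section
/- Let n and m be positive integers such that 3n+1 and 3m+1 are coprime. Then a₃(3mn + m + n) = a₃(n) · a₃(m), i.e. |C_{3mn+m+n}| = |C_n| · |C_m|. -/
/-- Eisenstein-like integers: `⟨a,b⟩` represents `a + b ζ` where `ζ² = ζ - 1`
(`ζ` a primitive 6th root of unity). -/
structure Ei where
  re : ℤ
  im : ℤ
  deriving DecidableEq

namespace Ei

@[ext]
theorem ext' : ∀ {z w : Ei}, z.re = w.re → z.im = w.im → z = w
  | ⟨_, _⟩, ⟨_, _⟩, rfl, rfl => rfl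

instance : Zero Ei := ⟨⟨0, 0⟩⟩
instance : One Ei := ⟨⟨1, 0⟩⟩
instance : Add Ei := ⟨fun z w => ⟨z.re + w.re, z.im + w.im⟩⟩
instance : Neg Ei := ⟨fun z => ⟨-z.re, -z.im⟩⟩
instance : Mul Ei := ⟨fun z w => ⟨z.re * w.re - z.im * w.im,
  z.re * w.im + z.im * w.re + z.im * w.im⟩⟩

@[simp] theorem zero_re : (0 : Ei).re = 0 := rfl
@[simp] theorem zero_im : (0 : Ei).im = 0 := rfl
@[simp] theorem one_re : (1 : Ei).re = 1 := rfl
@[simp] theorem one_im : (1 : Ei).im = 0 := rfl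
@[simp] theorem add_re (z w : Ei) : (z + w).re = z.re + w.re := rfl
@[simp] theorem add_im (z w : Ei) : (z + w).im = z.im + w.im := rfl
@[simp] theorem neg_re (z : Ei) : (-z).re = -z.re := rfl
@[simp] theorem neg_im (z : Ei) : (-z).im = -z.im := rfl
@[simp] theorem mul_re (z w : Ei) : (z * w).re = z.re * w.re - z.im * w.im := rfl
@[simp] theorem mul_im (z w : Ei) :
    (z * w).im = z.re * w.im + z.im * w.re + z.im * w.im := rfl

instance addCommGroup : AddCommGroup Ei := by
  refine
  { add := (· + ·)
    zero := (0 : Ei)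
    sub := fun a b => a + -b
    neg := Neg.neg
    nsmul := @nsmulRec Ei ⟨0⟩ ⟨(· + ·)⟩
    zsmul := @zsmulRec Ei ⟨0⟩ ⟨(· + ·)⟩ ⟨Neg.neg⟩ (@nsmulRec Ei ⟨0⟩ ⟨(· + ·)⟩)
    add_assoc := ?_
    zero_add := ?_
    add_zero := ?_
    neg_add_cancel := ?_
    add_comm := ?_ } <;>
  intros <;>
  ext <;>
  simp [add_comm, add_left_comm]

instance commRing : CommRing Ei := by
  refine
  { Ei.addCommGroup with
    mul := (· * ·)
    one := (1 : Ei)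
    npow := @npowRec Ei ⟨1⟩ ⟨(· * ·)⟩,
    add_comm := ?_
    left_distrib := ?_
    right_distrib := ?_
    zero_mul := ?_
    mul_zero := ?_
    mul_assoc := ?_
    one_mul := ?_
    mul_one := ?_
    mul_comm := ?_ } <;>
  intros <;>
  ext <;>
  simp <;>
  ring


@[simp] theorem sub_re (z w : Ei) : (z - w).re = z.re - w.re := by
  rw [sub_eq_add_neg]; simp [sub_eq_add_neg]
@[simp] theorem sub_im (z w : Ei) : (z - w).im = z.im - w.im := by
  rw [sub_eq_add_neg]; simp [sub_eq_add_neg]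

/-- The (multiplicative, positive-definite) norm. -/
def norm (z : Ei) : ℤ := z.re ^ 2 + z.re * z.im + z.im ^ 2

theorem norm_mul (z w : Ei) : norm (z * w) = norm z * norm w := by
  simp only [norm, mul_re, mul_im]; ring

theorem norm_nonneg (z : Ei) : 0 ≤ norm z := by
  have h := sq_nonneg (2 * z.re + z.im); have h2 := sq_nonneg z.im
  simp only [norm]; nlinarith

theorem norm_eq_zero_iff {z : Ei} : norm z = 0 ↔ z = 0 := by
  constructor
  · intro h
    have h1 := sq_nonneg (2 * z.re + z.im); have h2 := sq_nonneg z.im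
    simp only [norm] at h
    have hre : z.re = 0 := by nlinarith [sq_nonneg z.re, sq_nonneg (z.re + z.im), sq_nonneg (z.re - z.im)]
    have him : z.im = 0 := by nlinarith [sq_nonneg (z.re + z.im), sq_nonneg (z.re - z.im)]
    ext <;> assumption
  · rintro rfl; simp [norm]

theorem norm_one : norm 1 = 1 := by simp [norm]

/-- Conjugation. -/
def conj (z : Ei) : Ei := ⟨z.re + z.im, -z.im⟩

@[simp] theorem conj_re (z : Ei) : (conj z).re = z.re + z.im := rfl
@[simp] theorem conj_im (z : Ei) : (conj z).im = -z.im := rfl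

theorem norm_conj (z : Ei) : norm (conj z) = norm z := by simp only [norm, conj]; ring

theorem conj_mul (z w : Ei) : conj (z * w) = conj z * conj w := by
  ext <;> simp <;> ring

theorem conj_conj (z : Ei) : conj (conj z) = z := by ext <;> simp

theorem mul_conj (z : Ei) : z * conj z = ⟨norm z, 0⟩ := by
  ext <;> simp [norm] <;> ring

instance : Nontrivial Ei := ⟨⟨0, 1, by decide⟩⟩

instance : NoZeroDivisors Ei where
  eq_zero_or_eq_zero_of_mul_eq_zero {a b} h := by
    have : norm a * norm b = 0 := by rw [← norm_mul, h, norm_eq_zero_iff.2 rfl]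
    rcases mul_eq_zero.1 this with h' | h'
    · exact Or.inl (norm_eq_zero_iff.1 h')
    · exact Or.inr (norm_eq_zero_iff.1 h')

instance : IsDomain Ei := NoZeroDivisors.to_isDomain _

theorem norm_dvd_norm {z w : Ei} (h : z ∣ w) : norm z ∣ norm w := by
  obtain ⟨c, rfl⟩ := h; rw [norm_mul]; exact Dvd.intro _ rfl

theorem isUnit_iff_norm_eq_one {z : Ei} : IsUnit z ↔ norm z = 1 := by
  constructor
  · intro h
    have : norm z ∣ norm 1 := norm_dvd_norm h.dvd
    rw [norm_one] at this
    exact Int.eq_one_of_dvd_one (norm_nonneg z) this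
  · intro h
    exact IsUnit.of_mul_eq_one (a := z) (conj z) (by rw [mul_conj, h]; rfl)

theorem norm_pos_of_ne_zero {z : Ei} (hz : z ≠ 0) : 0 < norm z :=
  lt_of_le_of_ne (norm_nonneg z) (fun h => hz (norm_eq_zero_iff.1 h.symm))

/-- Rounded division. -/
def ediv (x y : Ei) : Ei :=
  ⟨round (((x * conj y).re : ℚ) / (norm y : ℚ)),
   round (((x * conj y).im : ℚ) / (norm y : ℚ))⟩

instance : Div Ei := ⟨ediv⟩

theorem div_def (x y : Ei) : x / y =
    ⟨round (((x * conj y).re : ℚ) / (norm y : ℚ)),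
     round (((x * conj y).im : ℚ) / (norm y : ℚ))⟩ := rfl

instance : Mod Ei := ⟨fun x y => x - y * (x / y)⟩

theorem mod_def (x y : Ei) : x % y = x - y * (x / y) := rfl

theorem round_bound (c d : ℤ) (hd : 0 < d) :
    2 * |c - round ((c : ℚ) / (d : ℚ)) * d| ≤ d := by
  have hdq : (0 : ℚ) < (d : ℚ) := by exact_mod_cast hd
  have h := abs_sub_round ((c : ℚ) / (d : ℚ))
  have key : (2 : ℚ) * |(c : ℚ) - (round ((c : ℚ) / (d : ℚ)) : ℚ) * d| ≤ (d : ℚ) := by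
    have : (c : ℚ) - (round ((c : ℚ) / (d : ℚ)) : ℚ) * d
        = ((c : ℚ) / d - (round ((c : ℚ) / (d : ℚ)) : ℚ)) * d := by
      field_simp
    rw [this, abs_mul, abs_of_pos hdq]
    nlinarith
  have h2 : ((2 * |c - round ((c : ℚ) / (d : ℚ)) * d| : ℤ) : ℚ) ≤ (d : ℚ) := by
    push_cast; exact key
  exact_mod_cast h2

theorem norm_mod_lt (x : Ei) {y : Ei} (hy : y ≠ 0) : norm (x % y) < norm y := by
  have hd : 0 < norm y := norm_pos_of_ne_zero hy
  set q := x / y with hq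
  set r := x % y with hr
  have hrc : r * conj y = ⟨(x * conj y).re - q.re * norm y, (x * conj y).im - q.im * norm y⟩ := by
    have : r = x - y * q := mod_def x y
    rw [this, sub_mul, mul_comm y q, mul_assoc, mul_conj]
    ext <;> simp <;> ring
  set e1 : ℤ := (x * conj y).re - q.re * norm y with he1
  set e2 : ℤ := (x * conj y).im - q.im * norm y with he2
  have hb1 : 2 * |e1| ≤ norm y := by
    rw [he1, hq, div_def]
    exact round_bound (x * conj y).re (norm y) hd
  have hb2 : 2 * |e2| ≤ norm y := by
    rw [he2, hq, div_def]
    exact round_bound (x * conj y).im (norm y) hd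
  have hnr : norm r * norm y = e1 ^ 2 + e1 * e2 + e2 ^ 2 := by
    rw [← norm_conj y, ← norm_mul, hrc]; simp [norm]
  have hab1 : -norm y ≤ 2 * e1 ∧ 2 * e1 ≤ norm y := abs_le.1 (by rw [abs_mul, abs_two]; exact hb1)
  have hab2 : -norm y ≤ 2 * e2 ∧ 2 * e2 ≤ norm y := abs_le.1 (by rw [abs_mul, abs_two]; exact hb2)
  obtain ⟨h1l, h1r⟩ := hab1
  obtain ⟨h2l, h2r⟩ := hab2
  nlinarith [hnr, hd, sq_nonneg (e1 - e2), mul_nonneg (by linarith : (0:ℤ) ≤ norm y - 2*e1) (by linarith : (0:ℤ) ≤ norm y + 2*e1), mul_nonneg (by linarith : (0:ℤ) ≤ norm y - 2*e2) (by linarith : (0:ℤ) ≤ norm y + 2*e2)]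


theorem natAbs_norm_mod_lt (x : Ei) {y : Ei} (hy : y ≠ 0) :
    (norm (x % y)).natAbs < (norm y).natAbs := by
  have h := norm_mod_lt x hy
  have h1 := norm_nonneg (x % y)
  have h2 := norm_nonneg y
  omega

theorem norm_le_norm_mul_left (x : Ei) {y : Ei} (hy : y ≠ 0) :
    (norm x).natAbs ≤ (norm (x * y)).natAbs := by
  rw [norm_mul, Int.natAbs_mul]
  have : 1 ≤ (norm y).natAbs := by
    have := norm_pos_of_ne_zero hy; omega
  exact Nat.le_mul_of_pos_right _ (by omega)

instance : EuclideanDomain Ei :=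
  { Ei.commRing, (inferInstance : Nontrivial Ei) with
    quotient := (· / ·)
    remainder := (· % ·)
    quotient_zero := fun x => by
      simp only [div_def]
      have : conj 0 = 0 := by ext <;> simp
      ext <;> simp [this, norm]
    quotient_mul_add_remainder_eq := fun x y => by show y * (x / y) + (x - y * (x / y)) = x; ring
    r := fun a b => (norm a).natAbs < (norm b).natAbs
    r_wellFounded := (measure (Int.natAbs ∘ norm)).wf
    remainder_lt := fun x y hy => natAbs_norm_mod_lt x hy
    mul_left_not_lt := fun a b hb0 => not_lt_of_ge <| norm_le_norm_mul_left a hb0 }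

/-- Componentwise residue mod 3. -/
def φ (z : Ei) : ZMod 3 × ZMod 3 := ((z.re : ZMod 3), (z.im : ZMod 3))

theorem φ_mul (z w : Ei) : φ (z * w) =
    ((φ z).1 * (φ w).1 - (φ z).2 * (φ w).2,
     (φ z).1 * (φ w).2 + (φ z).2 * (φ w).1 + (φ z).2 * (φ w).2) := by
  simp only [φ, mul_re, mul_im, Prod.mk.injEq]
  constructor <;> push_cast <;> ring

theorem φ_norm (z : Ei) : ((norm z : ℤ) : ZMod 3) =
    (φ z).1 ^ 2 + (φ z).1 * (φ z).2 + (φ z).2 ^ 2 := by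
  simp only [φ, norm]; push_cast; ring

theorem unit_eq_one_of_φ {u : Ei} (hu : IsUnit u) (hφ : φ u = (1, 0)) : u = 1 := by
  have hn : norm u = 1 := isUnit_iff_norm_eq_one.1 hu
  have h1 : (u.re : ZMod 3) = 1 := congrArg Prod.fst hφ
  have h2 : (u.im : ZMod 3) = 0 := congrArg Prod.snd hφ
  obtain ⟨k, hk⟩ := (ZMod.intCast_zmod_eq_zero_iff_dvd u.im 3).1 h2
  have h1' : ((u.re - 1 : ℤ) : ZMod 3) = 0 := by push_cast [h1]; ring
  obtain ⟨j, hj⟩ := (ZMod.intCast_zmod_eq_zero_iff_dvd _ 3).1 h1'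
  push_cast at hk hj
  simp only [norm] at hn
  have hre : u.re = 3 * j + 1 := by linarith
  have hk0 : k = 0 := by nlinarith [sq_nonneg (2 * u.re + u.im), sq_nonneg k]
  have him : u.im = 0 := by rw [hk, hk0]; ring
  rw [him, hre] at hn
  have hj' : j * (3 * j + 2) = 0 := by nlinarith
  rcases mul_eq_zero.1 hj' with h | h
  · ext <;> simp [hre, him, h]
  · omega

theorem exists_unit_mul_φ_one {x : Ei} (h : ((norm x : ℤ) : ZMod 3) = 1) :
    ∃ u : Ei, IsUnit u ∧ φ (u * x) = (1, 0) := by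
  have h' : (φ x).1 ^ 2 + (φ x).1 * (φ x).2 + (φ x).2 ^ 2 = 1 := by rw [← φ_norm, h]
  have key : ∀ a b : ZMod 3, a ^ 2 + a * b + b ^ 2 = 1 →
      ((a, b) : ZMod 3 × ZMod 3) = (1, 0) ∨ (a, b) = (2, 0) ∨ (a, b) = (0, 1) ∨
      (a, b) = (0, 2) ∨ (a, b) = (1, 2) ∨ (a, b) = (2, 1) := by decide
  rcases key _ _ h' with hp | hp | hp | hp | hp | hp <;>
    rw [Prod.mk.injEq] at hp <;> obtain ⟨h1, h2⟩ := hp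
  · exact ⟨⟨1, 0⟩, IsUnit.of_mul_eq_one ⟨1, 0⟩ (by ext <;> simp),
      by rw [φ_mul, h1, h2]; simp [φ]⟩
  · exact ⟨⟨-1, 0⟩, IsUnit.of_mul_eq_one ⟨-1, 0⟩ (by ext <;> simp),
      by rw [φ_mul, h1, h2]; simp [φ] <;> decide⟩
  · exact ⟨⟨1, -1⟩, IsUnit.of_mul_eq_one ⟨0, 1⟩ (by ext <;> simp),
      by rw [φ_mul, h1, h2]; simp [φ] <;> decide⟩
  · exact ⟨⟨-1, 1⟩, IsUnit.of_mul_eq_one ⟨0, -1⟩ (by ext <;> simp),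
      by rw [φ_mul, h1, h2]; simp [φ] <;> decide⟩
  · exact ⟨⟨0, 1⟩, IsUnit.of_mul_eq_one ⟨1, -1⟩ (by ext <;> simp),
      by rw [φ_mul, h1, h2]; simp [φ] <;> decide⟩
  · exact ⟨⟨0, -1⟩, IsUnit.of_mul_eq_one ⟨-1, 1⟩ (by ext <;> simp),
      by rw [φ_mul, h1, h2]; simp [φ] <;> decide⟩

theorem conj_dvd {z w : Ei} (h : z ∣ w) : conj z ∣ conj w := by
  obtain ⟨c, rfl⟩ := h; exact ⟨conj c, conj_mul z c⟩

theorem prime_conj {π : Ei} (hπ : Prime π) : Prime (conj π) := by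
  refine ⟨fun h => hπ.1 ?_, fun h => hπ.2.1 ?_, fun a b hab => ?_⟩
  · have := congrArg conj h
    rw [conj_conj] at this
    rw [this]; ext <;> simp
  · rw [isUnit_iff_norm_eq_one] at h ⊢
    rwa [norm_conj] at h
  · have h2 : π ∣ conj a * conj b := by
      have := conj_dvd hab
      rwa [conj_conj, conj_mul] at this
    rcases hπ.2.2 _ _ h2 with h3 | h3
    · left; have := conj_dvd h3; rwa [conj_conj] at this
    · right; have := conj_dvd h3; rwa [conj_conj] at this

theorem factor_step {M N q : ℕ} (hq : Nat.Prime q) (hqN : q ∣ N) (hco : Nat.Coprime N M)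
    (hM0 : M ≠ 0) (hN0 : N ≠ 0)
    (ih : ∀ m, m < N → Nat.Coprime m M → ∀ w : Ei, norm w = (m : ℤ) * (M : ℤ) →
      ∃ x y : Ei, w = x * y ∧ norm x = m ∧ norm y = M)
    {w π : Ei} (hπ : Prime π) (hπw : π ∣ w) (hπQ : π ∣ (⟨(q : ℤ), 0⟩ : Ei))
    (hw : norm w = (N : ℤ) * (M : ℤ)) :
    ∃ x y : Ei, w = x * y ∧ norm x = N ∧ norm y = M := by
  set k : ℕ := (norm π).toNat with hkdef
  have hk : (k : ℤ) = norm π := Int.toNat_of_nonneg (norm_nonneg π)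
  have hnormQ : norm (⟨(q : ℤ), 0⟩ : Ei) = ((q ^ 2 : ℕ) : ℤ) := by
    simp only [norm]; push_cast; ring
  have hkq2 : k ∣ q ^ 2 := by
    have := norm_dvd_norm hπQ
    rw [hnormQ, ← hk] at this
    exact_mod_cast this
  have hkNM : k ∣ N * M := by
    have := norm_dvd_norm hπw
    rw [hw, ← hk] at this
    exact_mod_cast this
  have hqM : Nat.Coprime q M := Nat.Coprime.coprime_dvd_left hqN hco
  have hkM : Nat.Coprime k M :=
    Nat.Coprime.coprime_dvd_left hkq2 (Nat.Coprime.pow_left 2 hqM)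
  have hkN : k ∣ N := Nat.Coprime.dvd_of_dvd_mul_right hkM hkNM
  have hk1 : k ≠ 1 := by
    intro h
    apply hπ.2.1
    rw [isUnit_iff_norm_eq_one, ← hk, h]
    norm_num
  have hk0 : k ≠ 0 := by
    intro h
    apply hπ.1
    apply norm_eq_zero_iff.1
    rw [← hk, h]; norm_num
  obtain ⟨w', rfl⟩ := hπw
  set N' : ℕ := N / k with hN'def
  have hNk : N = k * N' := (Nat.mul_div_cancel' hkN).symm
  have hw' : norm w' = (N' : ℤ) * (M : ℤ) := by
    have h1 : norm π * norm w' = (N : ℤ) * M := by rw [← norm_mul, hw]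
    rw [← hk] at h1
    have h2 : (N : ℤ) = (k : ℤ) * (N' : ℤ) := by exact_mod_cast congrArg (Nat.cast : ℕ → ℤ) hNk
    rw [h2, mul_assoc] at h1
    have hkz : (k : ℤ) ≠ 0 := by exact_mod_cast hk0
    exact mul_left_cancel₀ hkz h1
  have hN'M : Nat.Coprime N' M := Nat.Coprime.coprime_dvd_left (Nat.div_dvd_of_dvd hkN) hco
  have hN'lt : N' < N := Nat.div_lt_self (Nat.pos_of_ne_zero hN0) (by omega)
  obtain ⟨x', y', hxy, hnx, hny⟩ := ih N' hN'lt hN'M w' hw'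
  refine ⟨π * x', y', by rw [hxy, mul_assoc], ?_, hny⟩
  rw [norm_mul, ← hk, hnx]
  exact_mod_cast (congrArg (Nat.cast : ℕ → ℤ) hNk).symm

theorem exists_factor (M : ℕ) : ∀ N : ℕ, Nat.Coprime N M → ∀ w : Ei,
    norm w = (N : ℤ) * (M : ℤ) → ∃ x y : Ei, w = x * y ∧ norm x = N ∧ norm y = M := by
  intro N
  induction N using Nat.strong_induction_on with
  | _ N ih =>
    intro hco w hw
    rcases eq_or_ne N 1 with rfl | hN1
    · exact ⟨1, w, (one_mul w).symm, norm_one, by rw [hw]; push_cast; ring⟩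
    rcases eq_or_ne N 0 with rfl | hN0
    · have hw0 : w = 0 := norm_eq_zero_iff.1 (by rw [hw]; simp)
      have hM : M = 1 := by simpa [Nat.coprime_zero_left] using hco
      exact ⟨0, 1, by rw [hw0, zero_mul], by simp [norm], by rw [norm_one, hM]; norm_num⟩
    have hM0 : M ≠ 0 := by
      rintro rfl
      exact hN1 (by simpa [Nat.coprime_zero_right] using hco)
    obtain ⟨q, hq, hqN⟩ := Nat.exists_prime_and_dvd hN1
    set Q : Ei := ⟨(q : ℤ), 0⟩ with hQdef
    have hnormQ : norm Q = (q : ℤ) ^ 2 := by simp only [norm, hQdef]; ring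
    have hQ_not_unit : ¬IsUnit Q := by
      rw [isUnit_iff_norm_eq_one, hnormQ]
      have : 2 ≤ q := hq.two_le
      nlinarith [sq_nonneg ((q : ℤ) - 2)]
    have hQ0 : Q ≠ 0 := by
      intro h
      have h2 : (q : ℤ) = 0 := congrArg re h
      have : q = 0 := by exact_mod_cast h2
      exact hq.ne_zero this
    obtain ⟨π₀, hπ₀_irr, hπ₀Q⟩ := WfDvdMonoid.exists_irreducible_factor
      hQ_not_unit hQ0
    have hπ₀_prime : Prime π₀ := irreducible_iff_prime.1 hπ₀_irr
    -- Q divides w * conj w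
    have hwcw : w * conj w = ⟨(N : ℤ) * (M : ℤ), 0⟩ := by rw [mul_conj, hw]
    have hQdvd : Q ∣ w * conj w := by
      rw [hwcw]
      refine ⟨⟨((N / q) * M : ℕ), 0⟩, ?_⟩
      have hNat : N * M = q * (N / q * M) := by rw [← mul_assoc, Nat.mul_div_cancel' hqN]
      have hNat' : ((N : ℤ)) * M = (q : ℤ) * ((N / q * M : ℕ) : ℤ) := by exact_mod_cast hNat
      ext
      · simpa [hQdef] using hNat'
      · simp [hQdef]
    have ihm : ∀ m, m < N → Nat.Coprime m M → ∀ w : Ei, norm w = (m : ℤ) * (M : ℤ) →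
        ∃ x y : Ei, w = x * y ∧ norm x = m ∧ norm y = M := fun m hm => ih m hm
    rcases hπ₀_prime.2.2 w (conj w) (hπ₀Q.trans hQdvd) with hπw | hπw
    · exact factor_step hq hqN hco hM0 hN0 ihm hπ₀_prime hπw (hQdef ▸ hπ₀Q) hw
    · have hπw' : conj π₀ ∣ w := by
        have := conj_dvd hπw
        rwa [conj_conj] at this
      have hπQ' : conj π₀ ∣ (⟨(q : ℤ), 0⟩ : Ei) := by
        have := conj_dvd hπ₀Q
        have hcq : conj Q = (⟨(q : ℤ), 0⟩ : Ei) := by ext <;> simp [hQdef]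
        rwa [hcq] at this
      exact factor_step hq hqN hco hM0 hN0 ihm (prime_conj hπ₀_prime) hπw' hπQ' hw

theorem isCoprime_of_norm_coprime {x y : Ei} (h : IsCoprime (norm x) (norm y)) :
    IsCoprime x y := by
  rw [← EuclideanDomain.gcd_isUnit_iff]
  have h1 : norm (EuclideanDomain.gcd x y) ∣ norm x :=
    norm_dvd_norm (EuclideanDomain.gcd_dvd_left x y)
  have h2 : norm (EuclideanDomain.gcd x y) ∣ norm y :=
    norm_dvd_norm (EuclideanDomain.gcd_dvd_right x y)
  have h3 := h.isUnit_of_dvd' h1 h2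
  rw [Int.isUnit_iff] at h3
  rcases h3 with h3 | h3
  · exact isUnit_iff_norm_eq_one.2 h3
  · exfalso
    have := norm_nonneg (EuclideanDomain.gcd x y)
    omega

/-- Solutions of `norm z = N` in the residue class of `1` mod `3`. -/
def S (N : ℤ) : Set Ei := {z | norm z = N ∧ φ z = (1, 0)}

/-- The basic bijection between `C n` and `S (3n+1)`. -/
def toEi (p : ℤ × ℤ) : Ei := ⟨3 * p.1 + 3 * p.2 + 1, -(3 * p.1)⟩

theorem toEi_mem {n : ℤ} {p : ℤ × ℤ} (hp : p ∈ C n) : toEi p ∈ S (3 * n + 1) := by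
  constructor
  · simp only [norm, toEi]
    have hp' : 3 * p.1 ^ 2 + 3 * p.1 * p.2 + 3 * p.2 ^ 2 + p.1 + 2 * p.2 = n := hp
    linear_combination 3 * hp'
  · have h3 : ((3 : ZMod 3)) = 0 := by decide
    simp only [φ, toEi, Prod.mk.injEq]
    constructor <;> push_cast <;> rw [h3] <;> ring

theorem equivCS_bij (n : ℤ) :
    Function.Bijective (fun p : C n => (⟨toEi p.1, toEi_mem p.2⟩ : S (3 * n + 1))) := by
  constructor
  · rintro ⟨p, hp⟩ ⟨p', hp'⟩ h
    simp only [Subtype.mk.injEq, toEi, Ei.mk.injEq] at h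
    obtain ⟨h1, h2⟩ := h
    have : p.1 = p'.1 := by omega
    have : p.2 = p'.2 := by omega
    ext <;> simp_all
  · rintro ⟨z, hzn, hzφ⟩
    have h1 : (z.re : ZMod 3) = 1 := congrArg Prod.fst hzφ
    have h2 : (z.im : ZMod 3) = 0 := congrArg Prod.snd hzφ
    obtain ⟨s, hs⟩ := (ZMod.intCast_zmod_eq_zero_iff_dvd z.im 3).1 h2
    have h1' : ((z.re - 1 : ℤ) : ZMod 3) = 0 := by push_cast [h1]; ring
    obtain ⟨t, ht⟩ := (ZMod.intCast_zmod_eq_zero_iff_dvd _ 3).1 h1'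
    push_cast at hs ht
    refine ⟨⟨(-s, t + s), ?_⟩, ?_⟩
    · have hnorm : z.re ^ 2 + z.re * z.im + z.im ^ 2 = 3 * n + 1 := hzn
      have hre : z.re = 3 * t + 1 := by linarith
      rw [hre, hs] at hnorm
      show 3 * (-s) ^ 2 + 3 * (-s) * (t + s) + 3 * (t + s) ^ 2 + (-s) + 2 * (t + s) = n
      nlinarith [hnorm]
    · apply Subtype.ext
      show toEi (-s, t + s) = z
      ext
      · show 3 * (-s) + 3 * (t + s) + 1 = z.re
        omega
      · show -(3 * (-s)) = z.im
        omega

theorem mem_S_mul {N M : ℤ} {x y : Ei} (hx : x ∈ S N) (hy : y ∈ S M) :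
    x * y ∈ S (N * M) := by
  obtain ⟨hx1, hx2⟩ := hx
  obtain ⟨hy1, hy2⟩ := hy
  refine ⟨by rw [norm_mul, hx1, hy1], ?_⟩
  rw [φ_mul, hx2, hy2]
  decide

theorem ne_zero_of_S {N : ℤ} {x : Ei} (hx : x ∈ S N) (hN : ((N : ℤ) : ZMod 3) = 1) :
    x ≠ 0 := by
  intro h0
  rw [h0] at hx
  have : norm 0 = N := hx.1
  simp [norm] at this
  rw [← this] at hN
  norm_num at hN

theorem mulSBij {N M : ℕ} (hco : Nat.Coprime N M)
    (hN : (((N : ℕ) : ℤ) : ZMod 3) = 1) (hM : (((M : ℕ) : ℤ) : ZMod 3) = 1) :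
    Function.Bijective (fun z : (S (N : ℤ)) × (S (M : ℤ)) =>
      (⟨z.1.1 * z.2.1, mem_S_mul z.1.2 z.2.2⟩ : S ((N : ℤ) * (M : ℤ)))) := by
  have hcoZ : IsCoprime (N : ℤ) (M : ℤ) := Nat.isCoprime_iff_coprime.2 hco
  constructor
  · rintro ⟨⟨x, hx⟩, ⟨y, hy⟩⟩ ⟨⟨x', hx'⟩, ⟨y', hy'⟩⟩ hEq
    have h : x * y = x' * y' := congrArg Subtype.val hEq
    have hx0 : x ≠ 0 := ne_zero_of_S hx hN
    have hd1 : x ∣ x' := by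
      have hxco : IsCoprime x y' := isCoprime_of_norm_coprime (by rw [hx.1, hy'.1]; exact hcoZ)
      exact hxco.dvd_of_dvd_mul_right ⟨y, h.symm⟩
    have hd2 : x' ∣ x := by
      have hxco : IsCoprime x' y := isCoprime_of_norm_coprime (by rw [hx'.1, hy.1]; exact hcoZ)
      exact hxco.dvd_of_dvd_mul_right ⟨y', h⟩
    obtain ⟨u, hu⟩ := associated_of_dvd_dvd hd1 hd2
    have hφu : φ (u : Ei) = (1, 0) := by
      have h2 : φ x' = φ (x * u) := by rw [hu]
      rw [φ_mul, hx.2, hx'.2] at h2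
      simpa using h2.symm
    have hu1 : (u : Ei) = 1 := unit_eq_one_of_φ u.isUnit hφu
    have hxx' : x = x' := by rw [← hu, hu1, mul_one]
    have hyy' : y = y' := by
      apply mul_left_cancel₀ hx0
      rw [h, hxx']
    simp only [Prod.mk.injEq, Subtype.mk.injEq]
    exact ⟨hxx', hyy'⟩
  · rintro ⟨w, hw1, hw2⟩
    obtain ⟨x, y, rfl, hnx, hny⟩ := exists_factor M N hco w hw1
    have hx3 : ((norm x : ℤ) : ZMod 3) = 1 := by rw [hnx]; exact hN
    obtain ⟨u, hu, hφux⟩ := exists_unit_mul_φ_one hx3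
    obtain ⟨U, rfl⟩ := hu
    have hUnorm : norm (U : Ei) = 1 := isUnit_iff_norm_eq_one.1 U.isUnit
    have hUinorm : norm ((U⁻¹ : Eiˣ) : Ei) = 1 := isUnit_iff_norm_eq_one.1 U⁻¹.isUnit
    have hprod : ((U : Ei) * x) * (((U⁻¹ : Eiˣ) : Ei) * y) = x * y := by
      rw [mul_mul_mul_comm, Units.mul_inv, one_mul]
    have hφy : φ (((U⁻¹ : Eiˣ) : Ei) * y) = (1, 0) := by
      have h2 : φ (((U : Ei) * x) * (((U⁻¹ : Eiˣ) : Ei) * y)) = (1, 0) := by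
        rw [hprod]; exact hw2
      rw [φ_mul, hφux] at h2
      simpa using h2
    refine ⟨⟨⟨(U : Ei) * x, by rw [norm_mul, hUnorm, hnx, one_mul], hφux⟩,
      ⟨((U⁻¹ : Eiˣ) : Ei) * y, by rw [norm_mul, hUinorm, hny, one_mul], hφy⟩⟩, ?_⟩
    exact Subtype.ext hprod

end Ei

theorem stmt14 (n m : ℕ) (hn : 1 ≤ n) (hm : 1 ≤ m)
    (h : Nat.Coprime (3 * n + 1) (3 * m + 1)) :
    (C ((3 * m * n + m + n : ℕ) : ℤ)).ncard =
      (C (n : ℤ)).ncard * (C (m : ℤ)).ncard := by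
  classical
  have h3 : ((3 : ZMod 3)) = 0 := by decide
  have hN3 : (((3 * n + 1 : ℕ) : ℤ) : ZMod 3) = 1 := by push_cast; simp [h3]
  have hM3 : (((3 * m + 1 : ℕ) : ℤ) : ZMod 3) = 1 := by push_cast; simp [h3]
  have e2 := Equiv.ofBijective _ (Ei.mulSBij h hN3 hM3)
  have e1 : (C ((3 * m * n + m + n : ℕ) : ℤ)) ≃
      (Ei.S (((3 * n + 1 : ℕ) : ℤ) * ((3 * m + 1 : ℕ) : ℤ))) :=
    (Equiv.ofBijective _ (Ei.equivCS_bij ((3 * m * n + m + n : ℕ) : ℤ))).trans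
      (Equiv.setCongr (by congr 1; push_cast; ring))
  have e3 : (C ((n : ℕ) : ℤ)) ≃ (Ei.S ((3 * n + 1 : ℕ) : ℤ)) :=
    (Equiv.ofBijective _ (Ei.equivCS_bij (n : ℤ))).trans
      (Equiv.setCongr (by rw [show ((3 * n + 1 : ℕ) : ℤ) = 3 * (n : ℤ) + 1 by push_cast; ring]))
  have e4 : (C ((m : ℕ) : ℤ)) ≃ (Ei.S ((3 * m + 1 : ℕ) : ℤ)) :=
    (Equiv.ofBijective _ (Ei.equivCS_bij (m : ℤ))).trans
      (Equiv.setCongr (by rw [show ((3 * m + 1 : ℕ) : ℤ) = 3 * (m : ℤ) + 1 by push_cast; ring]))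
  rw [← Nat.card_coe_set_eq, ← Nat.card_coe_set_eq, ← Nat.card_coe_set_eq]
  rw [Nat.card_congr (e1.trans e2.symm), Nat.card_prod,
    Nat.card_congr e3.symm, Nat.card_congr e4.symm]
end

section
/- Let n ≥ 0 and m ≥ 1 be integers and set N = 4^m·n + (10·4^{m−1} − 1)/3 (which is an integer). Then there is no 3-core partition of N, i.e. C_N = ∅ (equivalently a₃(N) = 0). -/
lemma even_even_aux (a b : ℤ) (h : (2:ℤ) ∣ a^2 + a*b + b^2) :
    (2:ℤ) ∣ a ∧ (2:ℤ) ∣ b := by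
  obtain ⟨c, hc⟩ := h
  rcases Int.even_or_odd a with ⟨x, hx⟩ | ⟨x, hx⟩ <;>
    rcases Int.even_or_odd b with ⟨y, hy⟩ | ⟨y, hy⟩ <;> subst hx hy
  · exact ⟨⟨x, by ring⟩, ⟨y, by ring⟩⟩
  · exfalso
    have : 2*(2*x^2 + 2*x*y + x + 2*y^2 + 2*y) + 1 = 2*c := by rw [← hc]; ring
    omega
  · exfalso
    have : 2*(2*x^2 + 2*x + 2*x*y + y + 2*y^2) + 1 = 2*c := by rw [← hc]; ring
    omega
  · exfalso
    have : 2*(2*x^2 + 2*x + 2*x*y + x + y + 2*y^2 + 2*y + 1) + 1 = 2*c := by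
      rw [← hc]; ring
    omega

lemma key : ∀ (m : ℕ) (n a b : ℤ), a^2 + a*b + b^2 ≠ 2 * 4^m * (6*n+5) := by
  intro m
  induction m with
  | zero =>
    intro n a b h
    have h2 : (2:ℤ) ∣ a^2 + a*b + b^2 := ⟨4^0 * (6*n+5), by rw [h]; ring⟩
    obtain ⟨⟨x, hx⟩, ⟨y, hy⟩⟩ := even_even_aux a b h2
    subst hx hy
    have h4 : 4*(x^2 + x*y + y^2) = 2*(6*n+5) := by linear_combination h
    have := h4
    set Q := x^2 + x*y + y^2
    omega
  | succ k ih =>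
    intro n a b h
    have h2 : (2:ℤ) ∣ a^2 + a*b + b^2 := ⟨4^(k+1) * (6*n+5), by rw [h]; ring⟩
    obtain ⟨⟨x, hx⟩, ⟨y, hy⟩⟩ := even_even_aux a b h2
    subst hx hy
    have h4 : 4*(x^2 + x*y + y^2) = 4*(2 * 4^k * (6*n+5)) := by linear_combination h
    have h5 : x^2 + x*y + y^2 = 2 * 4^k * (6*n+5) :=
      mul_left_cancel₀ (by norm_num) h4
    exact ih n x y h5

theorem stmt17 (n m N : ℕ) (hm : 1 ≤ m)
    (hN : N = 4 ^ m * n + (10 * 4 ^ (m - 1) - 1) / 3) :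
    C (N : ℤ) = ∅ := by
  -- First: 3*N + 1 = 2 * 4^(m-1) * (6n+5) in ℕ
  have hnat : 3 * N + 1 = 2 * 4 ^ (m-1) * (6*n+5) := by
    set P := 4 ^ (m-1) with hP
    have hm4 : 4 ^ m = 4 * P := by
      rw [hP, ← pow_succ']
      congr 1
      omega
    have h3 : 10 * P % 3 = 1 := by
      have : P % 3 = 1 := by
        rw [hP, Nat.pow_mod]
        simp
      omega
    have hP1 : 1 ≤ P := Nat.one_le_iff_ne_zero.mpr (by positivity)
    have hexp : 2 * P * (6*n+5) = 12 * (P*n) + 10 * P := by ring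
    rw [hexp]
    have hN' : N = 4 * (P * n) + (10 * P - 1) / 3 := by rw [hN, hm4]; ring_nf
    omega
  ext ⟨x, y⟩
  simp only [C, Set.mem_setOf_eq, Set.mem_empty_iff_false, iff_false]
  intro h
  have hz : ((3:ℤ) * N + 1) = 2 * 4 ^ (m-1) * (6*(n:ℤ)+5) := by
    exact_mod_cast congrArg (Nat.cast : ℕ → ℤ) hnat
  have hform : (3*x)^2 + (3*x)*(3*y+1) + (3*y+1)^2 = 2 * 4^(m-1) * (6*(n:ℤ)+5) := by
    rw [← hz, ← h]; ring
  exact key (m-1) n (3*x) (3*y+1) hform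
end

section
/- Let n ≥ 0, m ≥ 1, k ≥ 1 be integers and let p be a prime with p ≡ 2 (mod 3) such that ν_p(6k−1) is odd and m ≢ 2k−1 (mod p). Set N = (6k−1)²n + (6k−1)m + 4k−1. Then there is no 3-core partition of N, i.e. C_N = ∅ (equivalently a₃(N) = 0). -/
lemma zmod_aux (p : ℕ) (hp : p.Prime) (hp3 : p % 3 = 2) (a b : ZMod p)
    (h : a ^ 2 + a * b + b ^ 2 = 0) : a = 0 ∧ b = 0 := by
  haveI : Fact p.Prime := ⟨hp⟩
  by_cases hb : b = 0
  · subst hb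
    refine ⟨?_, rfl⟩
    have : a ^ 2 = 0 := by linear_combination h
    exact pow_eq_zero_iff (n := 2) (by norm_num) |>.mp this
  · exfalso
    set t : ZMod p := a * b⁻¹ with ht
    have key : (t ^ 2 + t + 1) * b ^ 2 = a ^ 2 + a * b + b ^ 2 := by
      rw [ht]
      linear_combination (a ^ 2 * (b * b⁻¹ + 1) + a * b) * mul_inv_cancel₀ hb
    have ht1 : t ^ 2 + t + 1 = 0 := by
      rcases mul_eq_zero.mp (key.trans h) with h' | h'
      · exact h'
      · exact absurd (pow_eq_zero_iff (n := 2) (by norm_num) |>.mp h') hb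
    have ht3 : t ^ 3 = 1 := by linear_combination (t - 1) * ht1
    have htne1 : t ≠ 1 := by
      intro h1
      rw [h1] at ht1
      have h3 : ((3 : ℕ) : ZMod p) = 0 := by push_cast; linear_combination ht1
      have : p ∣ 3 := by rwa [ZMod.natCast_eq_zero_iff] at h3
      have := (Nat.prime_dvd_prime_iff_eq hp Nat.prime_three).mp this
      omega
    have htne0 : t ≠ 0 := by
      intro h0; rw [h0] at ht1; simp at ht1
    have hord : orderOf t = 3 := by
      have hdvd : orderOf t ∣ 3 := orderOf_dvd_of_pow_eq_one ht3
      rcases (Nat.prime_three).eq_one_or_self_of_dvd _ hdvd with h1 | h3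
      · exact absurd (orderOf_eq_one_iff.mp h1) htne1
      · exact h3
    have hcard : orderOf t ∣ p - 1 :=
      orderOf_dvd_of_pow_eq_one (ZMod.pow_card_sub_one_eq_one htne0)
    rw [hord] at hcard
    have hp1 : 1 ≤ p := hp.one_lt.le
    omega

lemma even_fact (p : ℕ) (hp : p.Prime) (hp3 : p % 3 = 2) (M : ℕ) :
    ∀ u v : ℤ, 0 < M → (M : ℤ) = u ^ 2 + u * v + v ^ 2 →
    Even (M.factorization p) := by
  induction M using Nat.strong_induction_on with
  | _ M ih =>
    intro u v hM hMuv
    by_cases hdvd : p ∣ M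
    · have hz : ((u : ZMod p)) ^ 2 + u * v + v ^ 2 = 0 := by
        have : ((M : ℤ) : ZMod p) = 0 := by
          rw [ZMod.intCast_zmod_eq_zero_iff_dvd]
          exact_mod_cast hdvd
        rw [hMuv] at this
        push_cast at this
        exact this
      obtain ⟨hu0, hv0⟩ := zmod_aux p hp hp3 _ _ hz
      obtain ⟨u', rfl⟩ := (ZMod.intCast_zmod_eq_zero_iff_dvd u p).mp hu0
      obtain ⟨v', rfl⟩ := (ZMod.intCast_zmod_eq_zero_iff_dvd v p).mp hv0
      have hMeq : (M : ℤ) = (p : ℤ) ^ 2 * (u' ^ 2 + u' * v' + v' ^ 2) := by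
        rw [hMuv]; ring
      have hQpos : 0 < u' ^ 2 + u' * v' + v' ^ 2 := by
        have hp0 : (0 : ℤ) < (p : ℤ) ^ 2 := by have := hp.pos; positivity
        nlinarith [hMeq, (by exact_mod_cast hM : (0:ℤ) < (M:ℤ))]
      set Q : ℕ := (u' ^ 2 + u' * v' + v' ^ 2).toNat with hQ
      have hQcast : (Q : ℤ) = u' ^ 2 + u' * v' + v' ^ 2 := Int.toNat_of_nonneg hQpos.le
      have hMQ : M = p ^ 2 * Q := by
        have : (M : ℤ) = ((p ^ 2 * Q : ℕ) : ℤ) := by push_cast [hQcast]; linarith [hMeq]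
        exact_mod_cast this
      have hQpos' : 0 < Q := by
        rcases Nat.eq_zero_or_pos Q with h0 | h0
        · rw [h0, mul_zero] at hMQ; omega
        · exact h0
      have hQlt : Q < M := by
        have hp2 : 2 ≤ p := hp.two_le
        have h4 : 4 ≤ p ^ 2 := by nlinarith
        have := Nat.mul_le_mul_right Q h4
        omega
      have hfac : M.factorization p = 2 + Q.factorization p := by
        rw [hMQ, Nat.factorization_mul (pow_ne_zero 2 hp.pos.ne') hQpos'.ne']
        simp [hp.factorization_pow, Nat.Prime.factorization hp]
      rw [hfac]
      exact Even.add even_two (ih Q hQlt u' v' hQpos' hQcast)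
    · simp [Nat.factorization_eq_zero_of_not_dvd hdvd]

theorem stmt18 (n m k N : ℕ) (hm : 1 ≤ m) (hk : 1 ≤ k) (p : ℕ) (hp : p.Prime)
    (hp3 : p % 3 = 2) (hodd : Odd ((6 * k - 1).factorization p))
    (hmk : ¬ m ≡ 2 * k - 1 [MOD p])
    (hN : N = (6 * k - 1) ^ 2 * n + (6 * k - 1) * m + (4 * k - 1)) :
    C (N : ℤ) = ∅ := by
  obtain ⟨k', rfl⟩ : ∃ k', k = k' + 1 := ⟨k - 1, by omega⟩
  rw [show 6 * (k' + 1) - 1 = 6 * k' + 5 from by omega] at hodd hN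
  rw [show 2 * (k' + 1) - 1 = 2 * k' + 1 from by omega] at hmk
  rw [show 4 * (k' + 1) - 1 = 4 * k' + 3 from by omega] at hN
  set A : ℕ := 6 * k' + 5 with hA
  set B : ℕ := 3 * A * n + 3 * m + 2 with hB
  -- 3N+1 factors
  have hfac : 3 * N + 1 = A * B := by
    subst hN; rw [hB, hA]; ring
  -- p divides A
  have hpA : p ∣ A := by
    by_contra hnd
    rw [Nat.factorization_eq_zero_of_not_dvd hnd] at hodd
    simp at hodd
  -- p does not divide B
  have hpB : ¬ p ∣ B := by
    intro hdB
    apply hmk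
    have hp3' : p ≠ 3 := by omega
    have h1 : (p : ℤ) ∣ (A : ℤ) := Int.natCast_dvd_natCast.mpr hpA
    have h2 : (p : ℤ) ∣ (B : ℤ) := Int.natCast_dvd_natCast.mpr hdB
    have h3 : (p : ℤ) ∣ 3 * (((2 * k' + 1 : ℕ) : ℤ) - (m : ℤ)) := by
      have heq : 3 * (((2 * k' + 1 : ℕ) : ℤ) - (m : ℤ)) = (A : ℤ) * (3 * n + 1) - (B : ℤ) := by
        push_cast [hA, hB]; ring
      rw [heq]
      exact dvd_sub (h1.mul_right _) h2
    have hpZ : Prime (p : ℤ) := Nat.prime_iff_prime_int.mp hp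
    rcases (hpZ.dvd_mul.mp h3) with h4 | h4
    · exfalso
      have : p ∣ 3 := by exact_mod_cast h4
      have := (Nat.prime_dvd_prime_iff_eq hp Nat.prime_three).mp this
      omega
    · exact (Nat.modEq_iff_dvd).mpr h4
  -- odd valuation of 3N+1
  have hoddM : Odd ((3 * N + 1).factorization p) := by
    rw [hfac, Nat.factorization_mul (by omega) (by positivity)]
    simp only [Finsupp.add_apply]
    rw [Nat.factorization_eq_zero_of_not_dvd hpB]
    simpa using hodd
  -- the representation gives even valuation: contradiction
  rw [Set.eq_empty_iff_forall_notMem]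
  rintro ⟨x, y⟩ hxy
  have hxy' : 3 * x ^ 2 + 3 * x * y + 3 * y ^ 2 + x + 2 * y = (N : ℤ) := hxy
  have hrep : ((3 * N + 1 : ℕ) : ℤ) = (3 * x) ^ 2 + (3 * x) * (3 * y + 1) + (3 * y + 1) ^ 2 := by
    push_cast
    linear_combination 3 * hxy'.symm
  have heven := even_fact p hp hp3 (3 * N + 1) (3 * x) (3 * y + 1) (by omega) hrep
  exact (Nat.not_even_iff_odd.mpr hoddM) heven
end

section
/- Let N be a nonnegative integer with no 3-core partition, i.e. C_N = ∅. Then either (a) there exists an integer k ≥ 1 with N = 4k−1 (equivalently 3N+1 = 2(6k−1)), or (b) there exist integers k ≥ 1, m ≥ 1 and an odd prime p with p ≡ 2 (mod 3) such that 6k−1 = p^e for some odd exponent e ≥ 1, m ≢ 2k−1 (mod p), and N = (6k−1)m + 4k−1. -/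
set_option maxHeartbeats 1000000

/-- `n` is representable by the form `x² + xy + y²`. -/
def Rep3 (n : ℕ) : Prop := ∃ a b : ℤ, a ^ 2 + a * b + b ^ 2 = (n : ℤ)

lemma rep_mul {m n : ℕ} (hm : Rep3 m) (hn : Rep3 n) : Rep3 (m * n) := by
  obtain ⟨a, b, h1⟩ := hm
  obtain ⟨c, d, h2⟩ := hn
  refine ⟨a * c - b * d, a * d + b * c + b * d, ?_⟩
  push_cast
  linear_combination (c ^ 2 + c * d + d ^ 2) * h1 + (m : ℤ) * h2

lemma rep_mod3 {n : ℕ} (h : Rep3 n) : n % 3 ≠ 2 := by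
  obtain ⟨a, b, hab⟩ := h
  intro h2
  have key : ∀ u v : ZMod 3, u ^ 2 + u * v + v ^ 2 ≠ 2 := by decide
  apply key (a : ZMod 3) (b : ZMod 3)
  have hc := congrArg (Int.cast : ℤ → ZMod 3) hab
  push_cast at hc
  rw [hc, show ((n : ZMod 3)) = ((n % 3 : ℕ) : ZMod 3) from (ZMod.natCast_mod n 3).symm, h2]
  norm_num

lemma exists_cube_root (p : ℕ) (hp : p.Prime) (h1 : p % 3 = 1) :
    ∃ x : ZMod p, x ^ 2 + x + 1 = 0 := by
  haveI : Fact p.Prime := ⟨hp⟩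
  obtain ⟨g, hg⟩ := IsCyclic.exists_generator (α := (ZMod p)ˣ)
  have hcard : Nat.card (ZMod p)ˣ = p - 1 := by
    rw [Nat.card_eq_fintype_card, ZMod.card_units_eq_totient, Nat.totient_prime hp]
  have hord : orderOf g = p - 1 := by
    rw [orderOf_eq_card_of_forall_mem_zpowers hg, hcard]
  have h3 : 3 ∣ p - 1 := by omega
  set ζ := g ^ ((p - 1) / 3) with hζ
  have hordζ : orderOf ζ = 3 := by
    rw [hζ, orderOf_pow, hord, Nat.gcd_eq_right (Nat.div_dvd_of_dvd h3),
      Nat.div_div_self h3 (by have := hp.two_le; omega)]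
  have hζ3 : ζ ^ 3 = 1 := by rw [← hordζ]; exact pow_orderOf_eq_one ζ
  have hζ1 : ζ ≠ 1 := by
    intro hcon
    rw [hcon, orderOf_one] at hordζ
    omega
  set x : ZMod p := ((ζ : (ZMod p)ˣ) : ZMod p) with hx
  refine ⟨x, ?_⟩
  have hx3 : x ^ 3 = 1 := by
    rw [hx, ← Units.val_pow_eq_pow_val, hζ3, Units.val_one]
  have hx1 : x ≠ 1 := by
    intro hcon
    exact hζ1 (Units.ext (by rw [← hx, hcon, Units.val_one]))
  have hfac : (x - 1) * (x ^ 2 + x + 1) = 0 := by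
    linear_combination hx3
  rcases mul_eq_zero.mp hfac with h | h
  · exact absurd (sub_eq_zero.mp h) hx1
  · exact h

lemma rep_prime_one_mod_three (p : ℕ) (hp : p.Prime) (h1 : p % 3 = 1) :
    ∃ a b : ℤ, a ^ 2 + a * b + b ^ 2 = (p : ℤ) := by
  haveI : Fact p.Prime := ⟨hp⟩
  obtain ⟨x, hx⟩ := exists_cube_root p hp h1
  set s := Nat.sqrt p with hs
  have hs2 : s * s < p := by
    have h0 : s * s ≤ p := by rw [hs]; exact Nat.sqrt_le p
    rcases lt_or_eq_of_le h0 with h | h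
    · exact h
    · exfalso
      have hdvd : s ∣ p := ⟨s, h.symm⟩
      rcases (Nat.Prime.eq_one_or_self_of_dvd hp s hdvd) with h' | h'
      · rw [h'] at h; have := hp.two_le; omega
      · rw [h'] at h; nlinarith [hp.two_le]
  -- pigeonhole
  have hcard : Fintype.card (ZMod p) < Fintype.card (Fin (s + 1) × Fin (s + 1)) := by
    rw [ZMod.card, Fintype.card_prod, Fintype.card_fin]
    nlinarith [Nat.lt_succ_sqrt' p]
  obtain ⟨u, v, huv, hfeq⟩ := Fintype.exists_ne_map_eq_of_card_lt
    (fun w : Fin (s + 1) × Fin (s + 1) => (w.1 : ZMod p) - x * (w.2 : ZMod p)) hcard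
  set a : ℤ := (u.1 : ℤ) - (v.1 : ℤ) with ha
  set b : ℤ := (u.2 : ℤ) - (v.2 : ℤ) with hb
  have hne : a ≠ 0 ∨ b ≠ 0 := by
    by_contra hcon
    push_neg at hcon
    apply huv
    have h1' : (u.1 : ℕ) = (v.1 : ℕ) := by omega
    have h2' : (u.2 : ℕ) = (v.2 : ℕ) := by omega
    exact Prod.ext (Fin.ext h1') (Fin.ext h2')
  have hab : (a : ZMod p) = x * (b : ZMod p) := by
    simp only [ha, hb]
    push_cast
    have : ((u.1 : ℕ) : ZMod p) - x * ((u.2 : ℕ) : ZMod p)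
        = ((v.1 : ℕ) : ZMod p) - x * ((v.2 : ℕ) : ZMod p) := hfeq
    linear_combination this
  have hkey : ((a ^ 2 + a * b + b ^ 2 : ℤ) : ZMod p) = 0 := by
    push_cast
    rw [hab]
    linear_combination ((b : ℤ) : ZMod p) ^ 2 * hx
  have hdvd : (p : ℤ) ∣ a ^ 2 + a * b + b ^ 2 :=
    (ZMod.intCast_zmod_eq_zero_iff_dvd _ p).mp hkey
  have ha1 : -(s : ℤ) ≤ a ∧ a ≤ s := by
    constructor <;> [skip; skip] <;>
      · have h1' := u.1.is_lt; have h2' := v.1.is_lt; simp only [ha]; omega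
  have hb1 : -(s : ℤ) ≤ b ∧ b ≤ s := by
    constructor <;> [skip; skip] <;>
      · have h1' := u.2.is_lt; have h2' := v.2.is_lt; simp only [hb]; omega
  have hQpos : 0 < a ^ 2 + a * b + b ^ 2 := by
    rcases hne with h | h
    · have : 0 < a ^ 2 := by positivity
      nlinarith [sq_nonneg (2 * b + a)]
    · have : 0 < b ^ 2 := by positivity
      nlinarith [sq_nonneg (2 * a + b)]
  have hQlt : a ^ 2 + a * b + b ^ 2 < 3 * p := by
    have hsp : (s : ℤ) * s < p := by exact_mod_cast hs2
    nlinarith [mul_nonneg (by linarith [ha1.1] : (0:ℤ) ≤ (s:ℤ) + a) (by linarith [hb1.1] : (0:ℤ) ≤ (s:ℤ) + b),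
      mul_nonneg (by linarith [ha1.2] : (0:ℤ) ≤ (s:ℤ) - a) (by linarith [hb1.2] : (0:ℤ) ≤ (s:ℤ) - b),
      mul_nonneg (by linarith [ha1.1] : (0:ℤ) ≤ (s:ℤ) + a) (by linarith [hb1.2] : (0:ℤ) ≤ (s:ℤ) - b),
      mul_nonneg (by linarith [ha1.2] : (0:ℤ) ≤ (s:ℤ) - a) (by linarith [hb1.1] : (0:ℤ) ≤ (s:ℤ) + b),
      mul_nonneg (by linarith [ha1.1] : (0:ℤ) ≤ (s:ℤ) + a) (by linarith [ha1.2] : (0:ℤ) ≤ (s:ℤ) - a),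
      mul_nonneg (by linarith [hb1.1] : (0:ℤ) ≤ (s:ℤ) + b) (by linarith [hb1.2] : (0:ℤ) ≤ (s:ℤ) - b)]
  obtain ⟨c, hc⟩ := hdvd
  have hppos : (0 : ℤ) < p := by exact_mod_cast hp.pos
  have hcpos : 0 < c := by
    rcases lt_trichotomy c 0 with h | h | h
    · nlinarith
    · rw [h, mul_zero] at hc; omega
    · exact h
  have hclt : c < 3 := by
    by_contra hcon
    push_neg at hcon
    nlinarith
  interval_cases c
  · exact ⟨a, b, by linarith [hc]⟩
  · -- c = 2 impossible mod 3
    exfalso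
    have key : ∀ u v : ZMod 3, u ^ 2 + u * v + v ^ 2 ≠ 2 := by decide
    apply key (a : ZMod 3) (b : ZMod 3)
    have hc3 := congrArg (Int.cast : ℤ → ZMod 3) hc
    push_cast at hc3
    rw [hc3, show ((p : ZMod 3)) = ((p % 3 : ℕ) : ZMod 3) from (ZMod.natCast_mod p 3).symm, h1]
    norm_num

lemma rep_of_even : ∀ n : ℕ, 0 < n →
    (∀ p : ℕ, p.Prime → p % 3 = 2 → Even (n.factorization p)) → Rep3 n := by
  intro n
  induction n using Nat.strong_induction_on with
  | _ n IH =>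
    intro hn hfac
    rcases eq_or_lt_of_le (show 1 ≤ n from hn) with h1 | h1
    · exact ⟨1, 0, by rw [← h1]; norm_num⟩
    have hne : n ≠ 1 := by omega
    set p := n.minFac with hpdef
    have hp : p.Prime := Nat.minFac_prime hne
    have hpd : p ∣ n := Nat.minFac_dvd n
    by_cases hp3 : p % 3 = 2
    · have hev := hfac p hp hp3
      have hpos : 0 < n.factorization p := hp.factorization_pos_of_dvd (by omega) hpd
      have h2le : 2 ≤ n.factorization p := by
        obtain ⟨j, hj⟩ := hev; omega
      have h2 : p ^ 2 ∣ n := (hp.pow_dvd_iff_le_factorization (by omega)).mpr h2le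
      set m := n / p ^ 2 with hmdef
      have hm : p ^ 2 * m = n := Nat.mul_div_cancel' h2
      have hp1 : 1 < p ^ 2 := by nlinarith [hp.two_le]
      have hmpos : 0 < m := Nat.div_pos (Nat.le_of_dvd hn h2) (by omega)
      have hmlt : m < n := Nat.div_lt_self hn hp1
      have hfd := Nat.factorization_div h2
      have hfm : ∀ q : ℕ, q.Prime → q % 3 = 2 → Even (m.factorization q) := by
        intro q hq hq3
        have : m.factorization q = n.factorization q - (p ^ 2).factorization q := by
          rw [hmdef, hfd]; rfl
        rw [this, hp.factorization_pow]
        by_cases hqp : q = p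
        · subst hqp
          rw [Finsupp.single_apply, if_pos rfl]
          obtain ⟨j, hj⟩ := hev
          exact ⟨j - 1, by omega⟩
        · rw [Finsupp.single_apply, if_neg (fun hh => hqp hh.symm)]
          simpa using hfac q hq hq3
      have hrepm := IH m hmlt hmpos hfm
      have hrepp : Rep3 (p ^ 2) := ⟨(p : ℤ), 0, by push_cast; ring⟩
      rw [← hm]
      exact rep_mul hrepp hrepm
    · have hrepp : Rep3 p := by
        by_cases hp3' : p = 3
        · exact ⟨1, 1, by rw [hp3']; norm_num⟩
        · have : ¬ 3 ∣ p := by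
            intro hd
            rcases hp.eq_one_or_self_of_dvd 3 hd with h | h <;> omega
          have : p % 3 = 1 := by omega
          exact rep_prime_one_mod_three p hp this
      set m := n / p with hmdef
      have hm : p * m = n := Nat.mul_div_cancel' hpd
      have hmpos : 0 < m := Nat.div_pos (Nat.le_of_dvd hn hpd) hp.pos
      have hmlt : m < n := Nat.div_lt_self hn hp.one_lt
      have hfd := Nat.factorization_div hpd
      have hfm : ∀ q : ℕ, q.Prime → q % 3 = 2 → Even (m.factorization q) := by
        intro q hq hq3
        have : m.factorization q = n.factorization q - p.factorization q := by
          rw [hmdef, hfd]; rfl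
        rw [this, hp.factorization]
        have hqp : q ≠ p := by intro hh; rw [hh] at hq3; exact hp3 hq3
        rw [Finsupp.single_apply, if_neg (fun hh => hqp hh.symm)]
        simpa using hfac q hq hq3
      have hrepm := IH m hmlt hmpos hfm
      rw [← hm]
      exact rep_mul hrepp hrepm

lemma not_rep_of_C_empty (N : ℕ) (h : C (N : ℤ) = ∅) : ¬ Rep3 (3 * N + 1) := by
  rintro ⟨a, b, hab⟩
  push_cast at hab
  have hsub : ∀ u v : ℤ, u % 3 = 0 → v % 3 = 1 →
      u ^ 2 + u * v + v ^ 2 = 3 * (N : ℤ) + 1 → False := by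
    intro u v hu hv huv
    obtain ⟨x, hx⟩ : ∃ x, u = 3 * x := ⟨u / 3, by omega⟩
    obtain ⟨y, hy⟩ : ∃ y, v = 3 * y + 1 := ⟨(v - 1) / 3, by omega⟩
    rw [hx, hy] at huv
    have hmem : (x, y) ∈ C (N : ℤ) := by
      show 3 * x ^ 2 + 3 * x * y + 3 * y ^ 2 + x + 2 * y = (N : ℤ)
      have h3 : 3 * (3 * x ^ 2 + 3 * x * y + 3 * y ^ 2 + x + 2 * y) + 1
          = 3 * (N : ℤ) + 1 := by linear_combination huv
      linarith
    rw [h] at hmem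
    exact Set.notMem_empty _ hmem
  have ha : a % 3 = 0 ∨ a % 3 = 1 ∨ a % 3 = 2 := by omega
  have hb : b % 3 = 0 ∨ b % 3 = 1 ∨ b % 3 = 2 := by omega
  -- the three "diagonal" cases are impossible mod 3
  have hdiag : ¬ ((3:ℤ) ∣ a ^ 2 + a * b + b ^ 2) := by
    intro hd
    rw [hab] at hd
    omega
  rcases ha with ha | ha | ha <;> rcases hb with hb | hb | hb
  · -- (0,0)
    apply hdiag
    obtain ⟨x, hx⟩ : ∃ x, a = 3 * x := ⟨a / 3, by omega⟩
    obtain ⟨y, hy⟩ : ∃ y, b = 3 * y := ⟨b / 3, by omega⟩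
    exact ⟨3 * x ^ 2 + 3 * x * y + 3 * y ^ 2, by rw [hx, hy]; ring⟩
  · exact hsub a b ha hb hab
  · exact hsub (-a) (-b) (by omega) (by omega) (by linear_combination hab)
  · exact hsub b a hb ha (by linear_combination hab)
  · -- (1,1)
    apply hdiag
    obtain ⟨x, hx⟩ : ∃ x, a = 3 * x + 1 := ⟨a / 3, by omega⟩
    obtain ⟨y, hy⟩ : ∃ y, b = 3 * y + 1 := ⟨b / 3, by omega⟩
    exact ⟨3 * x ^ 2 + 3 * x * y + 3 * y ^ 2 + 3 * x + 3 * y + 1, by rw [hx, hy]; ring⟩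
  · exact hsub (a + b) (-b) (by omega) (by omega) (by linear_combination hab)
  · exact hsub (-b) (-a) (by omega) (by omega) (by linear_combination hab)
  · exact hsub (-a - b) b (by omega) (by omega) (by linear_combination hab)
  · -- (2,2)
    apply hdiag
    obtain ⟨x, hx⟩ : ∃ x, a = 3 * x + 2 := ⟨a / 3, by omega⟩
    obtain ⟨y, hy⟩ : ∃ y, b = 3 * y + 2 := ⟨b / 3, by omega⟩
    exact ⟨3 * x ^ 2 + 3 * x * y + 3 * y ^ 2 + 6 * x + 6 * y + 4, by rw [hx, hy]; ring⟩

lemma pow_mod_six (p e : ℕ) (hp : p % 6 = 5) (he : Odd e) : p ^ e % 6 = 5 := by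
  obtain ⟨j, hj⟩ := he
  subst hj
  rw [Nat.pow_mod, hp]
  rw [pow_succ, pow_mul, Nat.mul_mod, Nat.pow_mod]
  norm_num

lemma two_pow_mod_three (e : ℕ) (he : Odd e) : 2 ^ e % 3 = 2 := by
  obtain ⟨j, hj⟩ := he
  subst hj
  rw [pow_succ, pow_mul]
  rw [Nat.mul_mod, Nat.pow_mod]
  norm_num

lemma exists_bad_prime {M : ℕ} (h0 : 0 < M) (hnr : ¬ Rep3 M) :
    ∃ p : ℕ, p.Prime ∧ p % 3 = 2 ∧ Odd (M.factorization p) := by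
  by_contra hcon
  push_neg at hcon
  exact hnr (rep_of_even M h0 (fun p hp hp3 =>
    Nat.not_odd_iff_even.mp (hcon p hp hp3)))

lemma exists_odd_bad_prime {M : ℕ} (h0 : 0 < M) (h3 : M % 3 = 1) (hnr : ¬ Rep3 M) :
    ∃ p : ℕ, p.Prime ∧ p ≠ 2 ∧ p % 3 = 2 ∧ Odd (M.factorization p) := by
  obtain ⟨q, hq, hq3, hqodd⟩ := exists_bad_prime h0 hnr
  by_cases hq2 : q = 2
  · subst hq2
    set e := M.factorization 2 with he
    set t := M / 2 ^ e with ht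
    have htpos : 0 < t := Nat.ordCompl_pos 2 (by omega)
    have ht2 : ¬ 2 ∣ t := Nat.not_dvd_ordCompl Nat.prime_two (by omega)
    have hMt : 2 ^ e * t = M := Nat.ordProj_mul_ordCompl_eq_self M 2
    have ht3 : t % 3 = 2 := by
      have h2e := two_pow_mod_three e hqodd
      have := Nat.mul_mod (2 ^ e) t 3
      rw [hMt, h2e, h3] at this
      omega
    have hnrt : ¬ Rep3 t := fun hr => rep_mod3 hr ht3
    obtain ⟨p, hp, hp3, hpodd⟩ := exists_bad_prime htpos hnrt
    have hp2 : p ≠ 2 := by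
      intro hh
      rw [hh, Nat.factorization_eq_zero_of_not_dvd ht2] at hpodd
      simp at hpodd
    refine ⟨p, hp, hp2, hp3, ?_⟩
    have : t.factorization = Finsupp.erase 2 M.factorization :=
      Nat.factorization_ordCompl M 2
    rwa [this, Finsupp.erase_ne hp2] at hpodd
  · exact ⟨q, hq, hq2, hq3, hqodd⟩

lemma main_odd (N p e : ℕ) (hp : p.Prime) (hp2 : p ≠ 2) (hp3 : p % 3 = 2)
    (he : Odd e) (hQdvd : p ^ e ∣ 3 * N + 1) (hnd : ¬ p ∣ (3 * N + 1) / p ^ e) :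
    (∃ k : ℕ, 1 ≤ k ∧ N = 4 * k - 1) ∨
    (∃ k m p e : ℕ, 1 ≤ k ∧ 1 ≤ m ∧ p.Prime ∧ p ≠ 2 ∧ p % 3 = 2 ∧
      1 ≤ e ∧ Odd e ∧ 6 * k - 1 = p ^ e ∧ ¬ m ≡ 2 * k - 1 [MOD p] ∧
      N = (6 * k - 1) * m + (4 * k - 1)) := by
  have hporder : p % 2 = 1 := Nat.Prime.eq_two_or_odd hp |>.resolve_left hp2
  have hp6 : p % 6 = 5 := by omega
  have he1 : 1 ≤ e := he.pos
  obtain ⟨Q, hQdef⟩ : ∃ Q, Q = p ^ e := ⟨_, rfl⟩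
  rw [← hQdef] at hQdvd hnd
  have hQ6 : Q % 6 = 5 := by rw [hQdef]; exact pow_mod_six p e hp6 he
  obtain ⟨t, htdef⟩ : ∃ t, t = (3 * N + 1) / Q := ⟨_, rfl⟩
  rw [← htdef] at hnd
  have hMt : Q * t = 3 * N + 1 := by rw [htdef]; exact Nat.mul_div_cancel' hQdvd
  have hQ3 : Q % 3 = 2 := by omega
  have ht3 : t % 3 = 2 := by
    have h' := Nat.mul_mod Q t 3
    rw [hMt, hQ3] at h'
    omega
  obtain ⟨k, hkQ, hk1⟩ : ∃ k, Q = 6 * k - 1 ∧ 1 ≤ k := ⟨(Q + 1) / 6, by omega⟩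
  by_cases ht2 : t = 2
  · left
    refine ⟨k, hk1, ?_⟩
    rw [ht2] at hMt
    omega
  · right
    have htge : 5 ≤ t := by omega
    obtain ⟨m, hmt, hm1⟩ : ∃ m, t = 3 * m + 2 ∧ 1 ≤ m := ⟨(t - 2) / 3, by omega⟩
    refine ⟨k, m, p, e, hk1, hm1, hp, hp2, hp3, he1, he, by omega, ?_, ?_⟩
    · intro hcon
      have h1 : 3 * m + 2 ≡ 3 * (2 * k - 1) + 2 [MOD p] := (hcon.mul_left 3).add_right 2
      have h2 : 3 * (2 * k - 1) + 2 = 6 * k - 1 := by omega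
      rw [h2] at h1
      have hpQ : p ∣ 6 * k - 1 := by
        rw [← hkQ, hQdef]
        exact dvd_pow_self p (by omega)
      have h3' : (6:ℕ) * k - 1 ≡ 0 [MOD p] := (Nat.modEq_zero_iff_dvd).mpr hpQ
      have h4 : 3 * m + 2 ≡ 0 [MOD p] := h1.trans h3'
      have h5 : p ∣ t := by
        rw [hmt]
        exact (Nat.modEq_zero_iff_dvd).mp h4
      exact hnd h5
    · have key : 3 * N + 1 = 3 * (Q * m) + 2 * Q := by
        rw [← hMt, hmt]; ring
      rw [← hkQ]
      -- goal : N = Q * m + (4 * k - 1)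
      obtain ⟨w, hw⟩ : ∃ w, Q * m = w := ⟨_, rfl⟩
      rw [hw] at key ⊢
      omega

theorem stmt19 (N : ℕ) (h : C (N : ℤ) = ∅) :
    (∃ k : ℕ, 1 ≤ k ∧ N = 4 * k - 1) ∨
    (∃ k m p e : ℕ, 1 ≤ k ∧ 1 ≤ m ∧ p.Prime ∧ p ≠ 2 ∧ p % 3 = 2 ∧
      1 ≤ e ∧ Odd e ∧ 6 * k - 1 = p ^ e ∧ ¬ m ≡ 2 * k - 1 [MOD p] ∧
      N = (6 * k - 1) * m + (4 * k - 1)) := by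
  have hnr := not_rep_of_C_empty N h
  obtain ⟨p, hp, hp2, hp3, hpodd⟩ :=
    exists_odd_bad_prime (M := 3 * N + 1) (by omega) (by omega) hnr
  exact main_odd N p ((3 * N + 1).factorization p) hp hp2 hp3 hpodd
    (Nat.ordProj_dvd _ _) (Nat.not_dvd_ordCompl hp (by omega))
end
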